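/- arXiv:1904.04897 — 8 statements merged into one kernel-verified Lean document; each statement's English description precedes it below -/
import Mathlib

section
/- If η : ℤ² → A is periodic of period h ∈ ℤ² \ {0}, then every one-dimensional subspace F ⊂ ℝ² that does not contain h (viewed in ℝ²) is expansive on X_η. That is, there exists t > 0 such that for all x, y ∈ X_η, if x and y agree on F^t := {g ∈ ℤ² : dist(g, F) ≤ t}, then x = y. -/
/-- The canonical embedding of the lattice `ℤ²` into `ℝ²`. -/
def emb (g : ℤ × ℤ) : ℝ × ℝ := ((g.1 : ℝ), (g.2 : ℝ))

lemma zsmul_periodic {A : Type*} (h : ℤ × ℤ) (z : ℤ × ℤ → A)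
    (hz : ∀ g, z (g + h) = z g) : ∀ n : ℤ, ∀ g, z (g + n • h) = z g := by
  intro n
  induction n using Int.induction_on with
  | zero => simp
  | succ k ih =>
      intro g
      have e : g + ((k : ℤ) + 1) • h = (g + (k : ℤ) • h) + h := by
        rw [add_smul, one_smul, add_assoc]
      rw [e, hz, ih]
  | pred k ih =>
      intro g
      have e : g + (-(k : ℤ) - 1) • h + h = g + (-(k : ℤ)) • h := by
        rw [add_assoc, sub_smul, one_smul]
        abel
      calc z (g + (-(k : ℤ) - 1) • h) = z (g + (-(k : ℤ) - 1) • h + h) := (hz _).symm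
        _ = z (g + (-(k : ℤ)) • h) := by rw [e]
        _ = z g := ih g

/-- If `η` is periodic of period `h ≠ 0`, then every one-dimensional subspace of `ℝ²`
not containing `h` is expansive on the orbit closure `X_η`. -/
theorem expansive_of_periodic
    {A : Type*} [Fintype A] [TopologicalSpace A] [DiscreteTopology A]
    (η : ℤ × ℤ → A) (h : ℤ × ℤ) (hh : h ≠ 0) (hper : ∀ g : ℤ × ℤ, η (g + h) = η g)
    (F : Submodule ℝ (ℝ × ℝ)) (hF : Module.finrank ℝ F = 1)
    (hhF : emb h ∉ F) :
    ∃ t : ℝ, 0 < t ∧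
      ∀ x ∈ closure {y : ℤ × ℤ → A | ∃ u : ℤ × ℤ, y = fun g => η (g + u)},
      ∀ y ∈ closure {y : ℤ × ℤ → A | ∃ u : ℤ × ℤ, y = fun g => η (g + u)},
        (∀ g : ℤ × ℤ, Metric.infDist (emb g) (F : Set (ℝ × ℝ)) ≤ t → x g = y g) →
        x = y := by
  classical
  obtain ⟨v, hv0, hvspan⟩ := finrank_eq_one_iff'.mp hF
  set w : ℝ × ℝ := (v : ℝ × ℝ) with hwdef
  have hw0 : w ≠ 0 := by
    simp only [hwdef, ne_eq, Submodule.coe_eq_zero]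
    exact hv0
  have hwF : w ∈ F := v.2
  set φ : ℝ × ℝ → ℝ := fun p => w.2 * p.1 - w.1 * p.2 with hφdef
  have hmemφ : ∀ p ∈ F, φ p = 0 := by
    intro p hp
    obtain ⟨c, hc⟩ := hvspan ⟨p, hp⟩
    have hcw : c • w = p := congrArg Subtype.val hc
    rw [← hcw]
    simp [hφdef, Prod.smul_fst, Prod.smul_snd, smul_eq_mul]
    ring
  have hker : ∀ p : ℝ × ℝ, φ p = 0 → p ∈ F := by
    intro p hp
    have hw' : w.1 ≠ 0 ∨ w.2 ≠ 0 := by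
      by_contra hc
      push_neg at hc
      exact hw0 (Prod.ext hc.1 hc.2)
    rcases hw' with h1 | h2
    · have : p = (p.1 / w.1) • w := by
        have hp' : w.2 * p.1 = w.1 * p.2 := by
          have := sub_eq_zero.mp hp
          linarith [this]
        apply Prod.ext
        · simp [smul_eq_mul]; field_simp
        · simp [smul_eq_mul]; field_simp; linarith [hp']
      rw [this]
      exact F.smul_mem _ hwF
    · have : p = (p.2 / w.2) • w := by
        have hp' : w.2 * p.1 = w.1 * p.2 := by
          have := sub_eq_zero.mp hp
          linarith [this]
        apply Prod.ext
        · simp [smul_eq_mul]; field_simp; linarith [hp']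
        · simp [smul_eq_mul]; field_simp
      rw [this]
      exact F.smul_mem _ hwF
  have hφh : φ (emb h) ≠ 0 := fun h0 => hhF (hker _ h0)
  have hembh0 : emb h ≠ 0 := by
    intro h0
    apply hh
    have h1 : (h.1 : ℝ) = 0 := congrArg Prod.fst h0
    have h2 : (h.2 : ℝ) = 0 := congrArg Prod.snd h0
    exact Prod.ext (by exact_mod_cast h1) (by exact_mod_cast h2)
  refine ⟨‖emb h‖, norm_pos_iff.mpr hembh0, ?_⟩
  intro x hx y hy hagree
  -- every element of the closure is h-periodic
  have hPclosed : IsClosed {z : (ℤ × ℤ) → A | ∀ g, z (g + h) = z g} := by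
    have heq : {z : (ℤ × ℤ) → A | ∀ g, z (g + h) = z g}
        = ⋂ g : ℤ × ℤ, {z | z (g + h) = z g} := by
      ext z; simp [Set.mem_iInter]
    rw [heq]
    exact isClosed_iInter fun g => isClosed_eq (continuous_apply _) (continuous_apply _)
  have hsub : {y : ℤ × ℤ → A | ∃ u : ℤ × ℤ, y = fun g => η (g + u)}
      ⊆ {z : (ℤ × ℤ) → A | ∀ g, z (g + h) = z g} := by
    rintro z ⟨u, rfl⟩ g
    have : g + h + u = (g + u) + h := by ring
    simp only [this, hper]
  have hclos := closure_minimal hsub hPclosed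
  have hxper : ∀ g, x (g + h) = x g := hclos hx
  have hyper : ∀ g, y (g + h) = y g := hclos hy
  funext g
  set r : ℝ := φ (emb g) / φ (emb h) with hrdef
  set n : ℤ := round r with hndef
  set g' : ℤ × ℤ := g + (-n) • h with hg'def
  have hembg' : emb g' = emb g - (n : ℝ) • emb h := by
    simp only [hg'def, emb, Prod.ext_iff, Prod.fst_add, Prod.snd_add,
      Prod.smul_fst, Prod.smul_snd, smul_eq_mul, Prod.fst_sub, Prod.snd_sub]
    constructor <;> push_cast <;> ring
  have hfmem : emb g' - (r - (n : ℝ)) • emb h ∈ F := by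
    apply hker
    rw [hembg']
    simp only [hφdef, Prod.fst_sub, Prod.snd_sub, Prod.smul_fst, Prod.smul_snd,
      smul_eq_mul]
    have : w.2 * (emb g).1 - w.1 * (emb g).2
        = r * (w.2 * (emb h).1 - w.1 * (emb h).2) := by
      have hcancel : r * φ (emb h) = φ (emb g) := by
        rw [hrdef]; exact div_mul_cancel₀ _ hφh
      simpa [hφdef] using hcancel.symm
    nlinarith [this]
  have hdist : Metric.infDist (emb g') (F : Set (ℝ × ℝ)) ≤ ‖emb h‖ := by
    have h1 : Metric.infDist (emb g') (F : Set (ℝ × ℝ))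
        ≤ dist (emb g') (emb g' - (r - (n : ℝ)) • emb h) :=
      Metric.infDist_le_dist_of_mem hfmem
    have h2 : dist (emb g') (emb g' - (r - (n : ℝ)) • emb h)
        = |r - (n : ℝ)| * ‖emb h‖ := by
      rw [dist_eq_norm]
      simp [norm_smul, abs_of_nonneg]
    have h3 : |r - (n : ℝ)| ≤ 1 / 2 := by
      rw [hndef]
      exact abs_sub_round r
    have h4 : |r - (n : ℝ)| * ‖emb h‖ ≤ 1 * ‖emb h‖ := by
      apply mul_le_mul_of_nonneg_right _ (norm_nonneg _)
      linarith
    rw [h2] at h1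
    linarith [h1, h4]
  have hxy := hagree g' hdist
  have hx' : x g' = x g := zsmul_periodic h x hxper (-n) g
  have hy' : y g' = y g := zsmul_periodic h y hyper (-n) g
  rw [← hx', hxy, hy']
end

section
/- Let η : ℤ² → A be a configuration whose range is all of A (|A| ≥ 2), and let S ⊂ ℤ² be a nonempty finite convex set whose convex hull in ℝ² has zero area (i.e., all points of S lie on a single line). If P_η(S) ≤ |S| + |A| - 2, then η is periodic. -/
/-- The number of distinct `S`-patterns of a configuration `η : ℤ² → A`. -/
noncomputable def patternCount {A : Type*} (η : ℤ × ℤ → A) (S : Finset (ℤ × ℤ)) : ℕ :=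
  Set.ncard {w : (↥S) → A | ∃ u : ℤ × ℤ, ∀ s : ↥S, w s = η (u + (s : ℤ × ℤ))}

/-- A finite subset of `ℤ²` is (lattice) convex if it contains every lattice point of its
real convex hull. -/
def IsLatticeConvex (S : Finset (ℤ × ℤ)) : Prop :=
  ∀ g : ℤ × ℤ, emb g ∈ convexHull ℝ (emb '' (S : Set (ℤ × ℤ))) → g ∈ S

set_option maxHeartbeats 1000000

namespace PeriodAux

set_option linter.unusedSectionVars false

variable {A : Type*} [Fintype A]

/-- The word of length `m` read from `u` in direction `v`. -/
def wrd (η : ℤ × ℤ → A) (v : ℤ × ℤ) (m : ℕ) (u : ℤ × ℤ) : Fin m → A :=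
  fun k => η (u + (k : ℤ) • v)

/-- The number of `m`-words in direction `v`. -/
noncomputable def pc (η : ℤ × ℤ → A) (v : ℤ × ℤ) (m : ℕ) : ℕ :=
  (Set.range (wrd η v m)).ncard

variable {η : ℤ × ℤ → A} {v : ℤ × ℤ} {m : ℕ}

lemma restrict_eq (u : ℤ × ℤ) :
    (wrd η v (m + 1) u) ∘ Fin.castSucc = wrd η v m u := by
  funext k; simp [wrd]

lemma shift_eq (u : ℤ × ℤ) :
    (wrd η v (m + 1) u) ∘ Fin.succ = wrd η v m (u + v) := by
  funext k
  show η (u + ((Fin.succ k : ℕ) : ℤ) • v) = η ((u + v) + (k : ℤ) • v)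
  congr 1
  have h : ((Fin.succ k : ℕ) : ℤ) = (k : ℤ) + 1 := by
    push_cast [Fin.val_succ]; ring
  rw [h, add_smul, one_smul]; abel

lemma img_restrict :
    (fun w : Fin (m+1) → A => w ∘ Fin.castSucc) '' Set.range (wrd η v (m+1))
      = Set.range (wrd η v m) := by
  rw [← Set.range_comp]
  exact congrArg Set.range (funext fun u => restrict_eq u)

lemma img_shift :
    (fun w : Fin (m+1) → A => w ∘ Fin.succ) '' Set.range (wrd η v (m+1))
      = Set.range (wrd η v m) := by
  rw [← Set.range_comp]
  have h : (fun u => wrd η v (m+1) u ∘ Fin.succ) = (fun u : ℤ × ℤ => wrd η v m (u + v)) :=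
    funext fun u => shift_eq u
  rw [show ((fun w : Fin (m+1) → A => w ∘ Fin.succ) ∘ wrd η v (m+1))
      = (fun u : ℤ × ℤ => wrd η v m (u + v)) from h]
  ext w
  constructor
  · rintro ⟨u, rfl⟩
    exact ⟨u + v, rfl⟩
  · rintro ⟨u, rfl⟩
    exact ⟨u - v, by simp⟩

lemma pc_mono : pc η v m ≤ pc η v (m + 1) := by
  rw [pc, pc, ← img_restrict]
  exact Set.ncard_image_le (Set.toFinite _)

lemma pc_one (hsurj : Function.Surjective η) : pc η v 1 = Fintype.card A := by
  have h : Set.range (wrd η v 1) = Set.univ := by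
    ext w
    simp only [Set.mem_univ, iff_true, Set.mem_range]
    obtain ⟨u, hu⟩ := hsurj (w 0)
    refine ⟨u, funext fun k => ?_⟩
    fin_cases k
    simp [wrd, hu]
  rw [pc, h, Set.ncard_univ, Nat.card_eq_fintype_card]
  simp [Fintype.card_fun]

variable (hle : pc η v (m + 1) ≤ pc η v m)
include hle

lemma ext_right {u u' : ℤ × ℤ} (hw : wrd η v m u = wrd η v m u') :
    η (u + (m : ℤ) • v) = η (u' + (m : ℤ) • v) := by
  have hcard : ((fun w : Fin (m+1) → A => w ∘ Fin.castSucc) '' Set.range (wrd η v (m+1))).ncard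
      = (Set.range (wrd η v (m+1))).ncard := by
    apply le_antisymm (Set.ncard_image_le (Set.toFinite _))
    rw [img_restrict]; exact hle
  have hinj := Set.injOn_of_ncard_image_eq hcard (Set.toFinite _)
  have heq : wrd η v (m+1) u = wrd η v (m+1) u' := by
    apply hinj ⟨u, rfl⟩ ⟨u', rfl⟩
    show wrd η v (m+1) u ∘ Fin.castSucc = wrd η v (m+1) u' ∘ Fin.castSucc
    rw [restrict_eq, restrict_eq, hw]
  have := congrFun heq (Fin.last m)
  simpa [wrd, Fin.val_last] using this

lemma ext_left {u u' : ℤ × ℤ} (hw : wrd η v m u = wrd η v m u') :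
    η (u - v) = η (u' - v) := by
  have hcard : ((fun w : Fin (m+1) → A => w ∘ Fin.succ) '' Set.range (wrd η v (m+1))).ncard
      = (Set.range (wrd η v (m+1))).ncard := by
    apply le_antisymm (Set.ncard_image_le (Set.toFinite _))
    rw [img_shift]; exact hle
  have hinj := Set.injOn_of_ncard_image_eq hcard (Set.toFinite _)
  have heq : wrd η v (m+1) (u - v) = wrd η v (m+1) (u' - v) := by
    apply hinj ⟨u - v, rfl⟩ ⟨u' - v, rfl⟩
    show wrd η v (m+1) (u - v) ∘ Fin.succ = wrd η v (m+1) (u' - v) ∘ Fin.succ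
    rw [shift_eq, shift_eq, sub_add_cancel, sub_add_cancel, hw]
  have := congrFun heq (0 : Fin (m+1))
  simpa [wrd] using this

lemma step_right {u u' : ℤ × ℤ} (hw : wrd η v m u = wrd η v m u') :
    wrd η v m (u + v) = wrd η v m (u' + v) := by
  funext k
  show η ((u + v) + (k : ℤ) • v) = η ((u' + v) + (k : ℤ) • v)
  have harith : ∀ x : ℤ × ℤ, (x + v) + (k : ℤ) • v = x + ((k : ℤ) + 1) • v := by
    intro x; rw [add_smul, one_smul]; abel
  rw [harith, harith]
  by_cases hk : (k : ℕ) + 1 = m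
  · have h2 : ((k : ℤ) + 1) = (m : ℤ) := by exact_mod_cast congrArg (Nat.cast : ℕ → ℤ) hk
    rw [h2]
    exact ext_right hle hw
  · have hlt : (k : ℕ) + 1 < m := lt_of_le_of_ne k.isLt hk
    have h3 := congrFun hw ⟨(k : ℕ) + 1, hlt⟩
    simp only [wrd] at h3
    have h4 : ((((k : ℕ) + 1 : ℕ)) : ℤ) = (k : ℤ) + 1 := by push_cast; ring
    rw [h4] at h3
    exact h3

lemma step_left {u u' : ℤ × ℤ} (hw : wrd η v m u = wrd η v m u') :
    wrd η v m (u - v) = wrd η v m (u' - v) := by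
  funext k
  show η ((u - v) + (k : ℤ) • v) = η ((u' - v) + (k : ℤ) • v)
  by_cases hk : (k : ℕ) = 0
  · have h0 : (k : ℤ) • v = 0 := by
      have : (k : ℤ) = 0 := by exact_mod_cast hk
      rw [this, zero_smul]
    rw [h0, add_zero, add_zero]
    exact ext_left hle hw
  · have hpos : 1 ≤ (k : ℕ) := Nat.one_le_iff_ne_zero.mpr hk
    have harith : ∀ x : ℤ × ℤ, (x - v) + (k : ℤ) • v = x + ((k : ℤ) - 1) • v := by
      intro x; rw [sub_smul, one_smul]; abel
    rw [harith, harith]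
    have hlt : (k : ℕ) - 1 < m := by omega
    have h3 := congrFun hw ⟨(k : ℕ) - 1, hlt⟩
    simp only [wrd] at h3
    have h4 : ((((k : ℕ) - 1 : ℕ)) : ℤ) = (k : ℤ) - 1 := by
      push_cast [Nat.cast_sub hpos]; ring
    rw [h4] at h3
    exact h3

lemma sync {u u' : ℤ × ℤ} (hw : wrd η v m u = wrd η v m u') :
    ∀ t : ℤ, wrd η v m (u + t • v) = wrd η v m (u' + t • v) := by
  intro t
  induction t using Int.induction_on with
  | zero => simpa using hw
  | succ i ih =>
      have h := step_right hle ih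
      have e : ∀ x : ℤ × ℤ, x + ((i : ℤ) + 1) • v = (x + (i : ℤ) • v) + v := by
        intro x; rw [add_smul, one_smul]; abel
      rw [e, e]; exact h
  | pred i ih =>
      have h := step_left hle ih
      have e : ∀ x : ℤ × ℤ, x + (-(i : ℤ) - 1) • v = (x + (-(i : ℤ)) • v) - v := by
        intro x; rw [sub_smul, one_smul]; abel
      rw [e, e]; exact h

lemma periodic_dir (hm1 : 1 ≤ m) :
    ∃ N : ℕ, 1 ≤ N ∧ ∀ u : ℤ × ℤ, η (u + (N : ℤ) • v) = η u := by
  classical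
  set T := Fintype.card (Fin m → A) with hT
  refine ⟨T.factorial, Nat.one_le_iff_ne_zero.mpr (Nat.factorial_ne_zero T), ?_⟩
  intro u
  obtain ⟨i, j, hij, hweq⟩ := Fintype.exists_ne_map_eq_of_card_lt
      (fun i : Fin (T + 1) => wrd η v m (u + (i : ℤ) • v)) (by rw [Fintype.card_fin, ← hT]; omega)
  have mk : ∀ i j : Fin (T + 1), (i : ℕ) < (j : ℕ) →
      wrd η v m (u + (i : ℤ) • v) = wrd η v m (u + (j : ℤ) • v) →
      ∃ d : ℕ, 1 ≤ d ∧ d ≤ T ∧ wrd η v m u = wrd η v m (u + (d : ℤ) • v) := by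
    intro i j hlt heq
    refine ⟨(j : ℕ) - (i : ℕ), by omega, by have := j.isLt; omega, ?_⟩
    have hs := sync hle heq (-(i : ℤ))
    have e1 : u + (i : ℤ) • v + (-(i : ℤ)) • v = u := by
      rw [add_assoc, ← add_smul]; simp
    have e2 : u + (j : ℤ) • v + (-(i : ℤ)) • v = u + ((((j : ℕ) - (i : ℕ) : ℕ)) : ℤ) • v := by
      rw [add_assoc, ← add_smul]
      congr 2
      push_cast [Nat.cast_sub hlt.le]
      ring
    rw [e1, e2] at hs
    exact hs
  have hd : ∃ d : ℕ, 1 ≤ d ∧ d ≤ T ∧ wrd η v m u = wrd η v m (u + (d : ℤ) • v) := by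
    rcases lt_or_gt_of_ne (fun h : (i : ℕ) = (j : ℕ) => hij (Fin.ext h)) with h | h
    · exact mk i j h hweq
    · exact mk j i h hweq.symm
  obtain ⟨d, hd1, hdT, hwd⟩ := hd
  have iter : ∀ c : ℕ, wrd η v m u = wrd η v m (u + ((c * d : ℕ) : ℤ) • v) := by
    intro c
    induction c with
    | zero => simp
    | succ c ih =>
        have hs := sync hle hwd ((c * d : ℕ) : ℤ)
        have e : u + (d : ℤ) • v + ((c * d : ℕ) : ℤ) • v
            = u + (((c + 1) * d : ℕ) : ℤ) • v := by
          rw [add_assoc, ← add_smul]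
          congr 2
          push_cast; ring
        rw [e] at hs
        exact ih.trans hs
  obtain ⟨c, hc⟩ := Nat.dvd_factorial hd1 hdT
  have h5 := iter c
  rw [show c * d = T.factorial from (Nat.mul_comm c d).trans hc.symm] at h5
  have h6 := congrFun h5 ⟨0, hm1⟩
  simp only [wrd] at h6
  simpa using h6.symm

omit hle

lemma patternCount_eq_pc (η : ℤ × ℤ → A) (a v : ℤ × ℤ) (n : ℕ) (S : Finset (ℤ × ℤ))
    (hmem : ∀ s : ℤ × ℤ, s ∈ S ↔ ∃ k < n, s = a + (k : ℤ) • v) :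
    patternCount η S = pc η v n := by
  classical
  have hΦmem : ∀ k : Fin n, a + ((k : ℕ) : ℤ) • v ∈ S := fun k =>
    (hmem _).2 ⟨(k : ℕ), k.isLt, rfl⟩
  set P : Set ((↥S) → A) := {w | ∃ u : ℤ × ℤ, ∀ s : ↥S, w s = η (u + (s : ℤ × ℤ))} with hP
  set Φ : ((↥S) → A) → (Fin n → A) := fun w k => w ⟨a + ((k : ℕ) : ℤ) • v, hΦmem k⟩ with hΦ
  have himg : Φ '' P = Set.range (wrd η v n) := by
    ext ω
    constructor
    · rintro ⟨w, ⟨u, hu⟩, rfl⟩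
      refine ⟨u + a, ?_⟩
      funext k
      show η ((u + a) + (k : ℤ) • v) = w ⟨a + ((k : ℕ) : ℤ) • v, hΦmem k⟩
      rw [hu ⟨a + ((k : ℕ) : ℤ) • v, hΦmem k⟩]
      congr 1
      abel
    · rintro ⟨u, rfl⟩
      refine ⟨fun s => η ((u - a) + (s : ℤ × ℤ)), ⟨u - a, fun s => rfl⟩, ?_⟩
      funext k
      show η ((u - a) + (a + ((k : ℕ) : ℤ) • v)) = η (u + ((k : ℕ) : ℤ) • v)
      congr 1
      abel
  have hinj : Set.InjOn Φ P := by
    intro w _ w' _ hΦeq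
    funext s
    obtain ⟨k, hk, hs⟩ := (hmem (s : ℤ × ℤ)).1 s.2
    have hseq : s = ⟨a + (((⟨k, hk⟩ : Fin n) : ℕ) : ℤ) • v, hΦmem ⟨k, hk⟩⟩ := Subtype.ext hs
    rw [hseq]
    exact congrFun hΦeq ⟨k, hk⟩
  show P.ncard = (Set.range (wrd η v n)).ncard
  rw [← himg, Set.ncard_image_of_injOn hinj]

lemma exists_int_smul {v w : ℤ × ℤ} (hv0 : v ≠ 0) (hprim : Int.gcd v.1 v.2 = 1)
    (hpar : w.1 * v.2 = w.2 * v.1) : ∃ t : ℤ, w = t • v := by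
  by_cases hv1 : v.1 = 0
  · have hv2 : v.2 ≠ 0 := fun h => hv0 (Prod.ext hv1 h)
    have hsq : v.2 * v.2 = 1 := by
      have : v.2.natAbs = 1 := by
        have := hprim; rw [hv1] at this; simpa [Int.gcd] using this
      rcases Int.natAbs_eq_iff.mp this with h | h <;> rw [h] <;> ring
    have hw1 : w.1 = 0 := by
      have h0 : w.1 * v.2 = 0 := by rw [hpar, hv1, mul_zero]
      rcases mul_eq_zero.mp h0 with h | h
      · exact h
      · exact absurd h hv2
    refine ⟨w.2 * v.2, ?_⟩
    apply Prod.ext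
    · simp [hw1, hv1, smul_eq_mul]
    · show w.2 = (w.2 * v.2) • v.2
      rw [smul_eq_mul, mul_assoc, hsq, mul_one]
  · have hcop : IsCoprime v.1 v.2 := Int.isCoprime_iff_gcd_eq_one.mpr hprim
    have hdvd : v.1 ∣ w.1 := hcop.dvd_of_dvd_mul_right ⟨w.2, by linarith [hpar]⟩
    obtain ⟨t, ht⟩ := hdvd
    refine ⟨t, ?_⟩
    apply Prod.ext
    · simp [ht, smul_eq_mul, mul_comm]
    · show w.2 = t • v.2
      rw [smul_eq_mul]
      have : v.1 * w.2 = v.1 * (t * v.2) := by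
        calc v.1 * w.2 = w.2 * v.1 := mul_comm _ _
          _ = w.1 * v.2 := hpar.symm
          _ = v.1 * t * v.2 := by rw [ht]
          _ = v.1 * (t * v.2) := by ring
      exact mul_left_cancel₀ hv1 this

lemma exists_enum (S : Finset (ℤ × ℤ)) (hconv : IsLatticeConvex S)
    (hcoll : Collinear ℝ (emb '' (S : Set (ℤ × ℤ))))
    (hS2 : 2 ≤ S.card) :
    ∃ (a v : ℤ × ℤ) (n : ℕ), v ≠ 0 ∧ S.card = n ∧
      (∀ s : ℤ × ℤ, s ∈ S ↔ ∃ k < n, s = a + (k : ℤ) • v) := by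
  classical
  obtain ⟨pt, hpt, qt, hqt, hpq⟩ := Finset.one_lt_card.mp hS2
  set d : ℤ × ℤ := qt - pt with hd
  have hd0 : d ≠ 0 := sub_ne_zero.mpr hpq.symm
  set g : ℕ := Int.gcd d.1 d.2 with hg
  have hgpos : 0 < g := by
    rw [hg, Int.gcd_pos_iff]
    by_contra hcon
    push_neg at hcon
    exact hd0 (Prod.ext hcon.1 hcon.2)
  set v : ℤ × ℤ := (d.1 / g, d.2 / g) with hv
  have hgv : (g : ℤ) • v = d := by
    apply Prod.ext
    · show (g : ℤ) • (d.1 / (g : ℤ)) = d.1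
      rw [smul_eq_mul]
      exact Int.mul_ediv_cancel' (Int.gcd_dvd_left _ _)
    · show (g : ℤ) • (d.2 / (g : ℤ)) = d.2
      rw [smul_eq_mul]
      exact Int.mul_ediv_cancel' (Int.gcd_dvd_right _ _)
  have hprim : Int.gcd v.1 v.2 = 1 := by
    show Int.gcd (d.1 / (g : ℤ)) (d.2 / (g : ℤ)) = 1
    exact Int.gcd_div_gcd_div_gcd (by exact_mod_cast hgpos)
  have hv0 : v ≠ 0 := by
    intro h
    apply hd0
    rw [← hgv, h, smul_zero]
  clear_value d g v
  -- collinearity: the integer cross-product identity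
  have hptmem : emb pt ∈ emb '' (S : Set (ℤ × ℤ)) := ⟨pt, hpt, rfl⟩
  rw [collinear_iff_of_mem hptmem] at hcoll
  obtain ⟨v₀, hv₀⟩ := hcoll
  have hcross : ∀ s ∈ S, (s.1 - pt.1) * d.2 = (s.2 - pt.2) * d.1 := by
    intro s hs
    obtain ⟨ts, hts⟩ := hv₀ (emb s) ⟨s, hs, rfl⟩
    obtain ⟨tq, htq⟩ := hv₀ (emb qt) ⟨qt, hqt, rfl⟩
    have h1 : (s.1 : ℝ) = ts * v₀.1 + pt.1 := by
      have := congrArg Prod.fst hts; simpa [emb] using this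
    have h2 : (s.2 : ℝ) = ts * v₀.2 + pt.2 := by
      have := congrArg Prod.snd hts; simpa [emb] using this
    have h3 : (qt.1 : ℝ) = tq * v₀.1 + pt.1 := by
      have := congrArg Prod.fst htq; simpa [emb] using this
    have h4 : (qt.2 : ℝ) = tq * v₀.2 + pt.2 := by
      have := congrArg Prod.snd htq; simpa [emb] using this
    have hreal : ((s.1 : ℝ) - pt.1) * ((qt.2 : ℝ) - pt.2)
        = ((s.2 : ℝ) - pt.2) * ((qt.1 : ℝ) - pt.1) := by
      rw [h1, h2, h3, h4]; ring
    have hd1 : d.1 = qt.1 - pt.1 := by simp [hd]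
    have hd2 : d.2 = qt.2 - pt.2 := by simp [hd]
    rw [hd1, hd2]
    exact_mod_cast hreal
  -- every point of S is pt + t • v
  have hpar : ∀ s ∈ S, ∃ t : ℤ, s = pt + t • v := by
    intro s hs
    have hcr : (s - pt).1 * v.2 = (s - pt).2 * v.1 := by
      have hc := hcross s hs
      have hd1 : d.1 = (g : ℤ) * v.1 := by rw [← hgv]; simp [smul_eq_mul]
      have hd2 : d.2 = (g : ℤ) * v.2 := by rw [← hgv]; simp [smul_eq_mul]
      rw [hd1, hd2] at hc
      have hgne : (g : ℤ) ≠ 0 := by exact_mod_cast hgpos.ne'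
      apply mul_left_cancel₀ hgne
      have hs1 : (s - pt).1 = s.1 - pt.1 := rfl
      have hs2 : (s - pt).2 = s.2 - pt.2 := rfl
      rw [hs1, hs2]; linarith [hc]
    obtain ⟨t, ht⟩ := exists_int_smul hv0 hprim hcr
    exact ⟨t, by rw [← ht]; abel⟩
  -- the parameter function
  set f : ℤ × ℤ → ℤ := fun s => if v.1 = 0 then (s.2 - pt.2) / v.2 else (s.1 - pt.1) / v.1 with hfdef
  have hf : ∀ {s : ℤ × ℤ} {t : ℤ}, s = pt + t • v → f s = t := by
    intro s t hst
    have h1 : s.1 - pt.1 = t * v.1 := by rw [hst]; show pt.1 + t • v.1 - pt.1 = t * v.1; rw [smul_eq_mul]; ring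
    have h2 : s.2 - pt.2 = t * v.2 := by rw [hst]; show pt.2 + t • v.2 - pt.2 = t * v.2; rw [smul_eq_mul]; ring
    by_cases hv1 : v.1 = 0
    · have hv2 : v.2 ≠ 0 := fun h => hv0 (Prod.ext hv1 h)
      simp only [hfdef, if_pos hv1, h2]
      exact Int.mul_ediv_cancel t hv2
    · simp only [hfdef, if_neg hv1, h1]
      exact Int.mul_ediv_cancel t hv1
  have hsf : ∀ s ∈ S, s = pt + f s • v := by
    intro s hs
    obtain ⟨t, ht⟩ := hpar s hs
    rw [hf ht]; exact ht
  clear_value f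
  have hTne : (S.image f).Nonempty := ⟨f pt, Finset.mem_image_of_mem f hpt⟩
  set m₀ : ℤ := (S.image f).min' hTne with hm₀
  set M₀ : ℤ := (S.image f).max' hTne with hM₀
  have hminle : ∀ s ∈ S, m₀ ≤ f s := by
    intro s hs
    rw [hm₀]
    exact Finset.min'_le _ (f s) (Finset.mem_image_of_mem f hs)
  have hlemax : ∀ s ∈ S, f s ≤ M₀ := by
    intro s hs
    rw [hM₀]
    exact Finset.le_max' _ (f s) (Finset.mem_image_of_mem f hs)
  have hmM : m₀ ≤ M₀ := le_trans (hminle pt hpt) (hlemax pt hpt)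
  have hendS : ∀ t₀ : ℤ, t₀ ∈ S.image f → pt + t₀ • v ∈ S := by
    intro t₀ ht₀
    obtain ⟨s, hs, hfs⟩ := Finset.mem_image.mp ht₀
    have := hsf s hs
    rw [hfs] at this
    rw [← this]
    exact hs
  have hm₀S : pt + m₀ • v ∈ S := hendS m₀ (by rw [hm₀]; exact Finset.min'_mem _ hTne)
  have hM₀S : pt + M₀ • v ∈ S := hendS M₀ (by rw [hM₀]; exact Finset.max'_mem _ hTne)
  clear_value m₀ M₀
  -- the coordinates of emb (pt + z • v)
  have hc : ∀ z : ℤ, emb (pt + z • v)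
      = ((pt.1 : ℝ) + (z : ℝ) * (v.1 : ℝ), (pt.2 : ℝ) + (z : ℝ) * (v.2 : ℝ)) := by
    intro z
    have e1 : (pt + z • v).1 = pt.1 + z * v.1 := by simp [smul_eq_mul]
    have e2 : (pt + z • v).2 = pt.2 + z * v.2 := by simp [smul_eq_mul]
    apply Prod.ext
    · show (((pt + z • v).1 : ℤ) : ℝ) = _
      rw [e1]; push_cast; ring
    · show (((pt + z • v).2 : ℤ) : ℝ) = _
      rw [e2]; push_cast; ring
  -- lattice convexity: all intermediate points are in S
  have hmid : ∀ t : ℤ, m₀ ≤ t → t ≤ M₀ → pt + t • v ∈ S := by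
    intro t h1 h2
    apply hconv
    have hx : emb (pt + m₀ • v) ∈ convexHull ℝ (emb '' (S : Set (ℤ × ℤ))) :=
      subset_convexHull ℝ _ ⟨pt + m₀ • v, hm₀S, rfl⟩
    have hy : emb (pt + M₀ • v) ∈ convexHull ℝ (emb '' (S : Set (ℤ × ℤ))) :=
      subset_convexHull ℝ _ ⟨pt + M₀ • v, hM₀S, rfl⟩
    by_cases hMm : M₀ = m₀
    · have ht : t = m₀ := by omega
      rw [ht]; exact hx
    · have hltR : (m₀ : ℝ) < (M₀ : ℝ) := by
        have : m₀ < M₀ := lt_of_le_of_ne hmM (Ne.symm hMm)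
        exact_mod_cast this
      have hden : (0 : ℝ) < (M₀ : ℝ) - (m₀ : ℝ) := by linarith
      set θ : ℝ := ((t : ℝ) - (m₀ : ℝ)) / ((M₀ : ℝ) - (m₀ : ℝ)) with hθ
      have ht1R : (m₀ : ℝ) ≤ (t : ℝ) := by exact_mod_cast h1
      have ht2R : (t : ℝ) ≤ (M₀ : ℝ) := by exact_mod_cast h2
      have hθ0 : 0 ≤ θ := div_nonneg (by linarith) hden.le
      have hθ1 : θ ≤ 1 := by rw [hθ, div_le_one hden]; linarith
      have hseg : emb (pt + t • v) ∈ segment ℝ (emb (pt + m₀ • v)) (emb (pt + M₀ • v)) := by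
        refine ⟨1 - θ, θ, by linarith, hθ0, by ring, ?_⟩
        rw [hc, hc, hc]
        have hcomb : (1 - θ) * (m₀ : ℝ) + θ * (M₀ : ℝ) = (t : ℝ) := by
          rw [hθ]; field_simp; ring
        apply Prod.ext
        · show (1 - θ) * ((pt.1 : ℝ) + (m₀ : ℝ) * (v.1 : ℝ))
              + θ * ((pt.1 : ℝ) + (M₀ : ℝ) * (v.1 : ℝ)) = (pt.1 : ℝ) + (t : ℝ) * (v.1 : ℝ)
          rw [← hcomb]; ring
        · show (1 - θ) * ((pt.2 : ℝ) + (m₀ : ℝ) * (v.2 : ℝ))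
              + θ * ((pt.2 : ℝ) + (M₀ : ℝ) * (v.2 : ℝ)) = (pt.2 : ℝ) + (t : ℝ) * (v.2 : ℝ)
          rw [← hcomb]; ring
      exact (convex_convexHull ℝ _).segment_subset hx hy hseg
  -- enumerate
  set n : ℕ := (M₀ - m₀).toNat + 1 with hn
  set a : ℤ × ℤ := pt + m₀ • v with ha
  clear_value n a
  have hmemiff : ∀ s : ℤ × ℤ, s ∈ S ↔ ∃ k < n, s = a + (k : ℤ) • v := by
    intro s
    constructor
    · intro hs
      have hfm : m₀ ≤ f s := hminle s hs
      have hfM : f s ≤ M₀ := hlemax s hs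
      refine ⟨(f s - m₀).toNat, by omega, ?_⟩
      have hk : ((f s - m₀).toNat : ℤ) = f s - m₀ := Int.toNat_of_nonneg (by omega)
      have key : pt + m₀ • v + (f s - m₀) • v = pt + f s • v := by
        rw [sub_smul]; abel
      rw [hk, ha, key]
      exact hsf s hs
    · rintro ⟨k, hk, rfl⟩
      have hkZ : (k : ℤ) ≤ M₀ - m₀ := by
        rw [hn] at hk
        have : (k : ℤ) < ((M₀ - m₀).toNat : ℤ) + 1 := by exact_mod_cast hk
        rw [Int.toNat_of_nonneg (by omega)] at this
        omega
      have harith : a + (k : ℤ) • v = pt + (m₀ + (k : ℤ)) • v := by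
        rw [ha, add_smul]; abel
      rw [harith]
      exact hmid (m₀ + k) (by omega) (by omega)
  refine ⟨a, v, n, hv0, ?_, hmemiff⟩
  -- card
  have hSimg : S = Finset.image (fun k : ℕ => a + (k : ℤ) • v) (Finset.range n) := by
    ext s
    rw [hmemiff s]
    simp only [Finset.mem_image, Finset.mem_range]
    constructor
    · rintro ⟨k, hk, rfl⟩; exact ⟨k, hk, rfl⟩
    · rintro ⟨k, hk, rfl⟩; exact ⟨k, hk, rfl⟩
  rw [hSimg, Finset.card_image_of_injOn, Finset.card_range]
  intro k _ k' _ hkk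
  have h0 : ((k : ℤ) - (k' : ℤ)) • v = 0 := by
    have : (k : ℤ) • v = (k' : ℤ) • v := by
      have := hkk
      simpa [add_right_inj] using this
    rw [sub_smul, this, sub_self]
  have h1 : ((k : ℤ) - (k' : ℤ)) * v.1 = 0 := congrArg Prod.fst h0
  have h2 : ((k : ℤ) - (k' : ℤ)) * v.2 = 0 := congrArg Prod.snd h0
  have : (k : ℤ) = (k' : ℤ) := by
    by_contra hne
    apply hv0
    have hsub : (k : ℤ) - (k' : ℤ) ≠ 0 := by omega
    rcases mul_eq_zero.mp h1 with h | h
    · exact absurd h hsub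
    · rcases mul_eq_zero.mp h2 with h' | h'
      · exact absurd h' hsub
      · exact Prod.ext h h'
  exact_mod_cast this

end PeriodAux

/-- If `S` is a nonempty finite convex set lying on a line and `P_η(S) ≤ |S| + |A| - 2`,
then `η` (containing all letters of `A`) is periodic. -/
theorem periodic_of_collinear_lowComplexity
    {A : Type*} [Fintype A] (hA : 2 ≤ Fintype.card A)
    (η : ℤ × ℤ → A) (hsurj : Function.Surjective η)
    (S : Finset (ℤ × ℤ)) (hSne : S.Nonempty) (hconv : IsLatticeConvex S)
    (hcoll : Collinear ℝ (emb '' (S : Set (ℤ × ℤ))))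
    (hcomp : patternCount η S ≤ S.card + Fintype.card A - 2) :
    ∃ h : ℤ × ℤ, h ≠ 0 ∧ ∀ g : ℤ × ℤ, η (g + h) = η g := by
  classical
  by_cases hS1 : S.card = 1
  · exfalso
    obtain ⟨a, hSa⟩ := Finset.card_eq_one.mp hS1
    have haS : a ∈ S := by simp [hSa]
    have hall : {w : (↥S) → A | ∃ u : ℤ × ℤ, ∀ s : ↥S, w s = η (u + (s : ℤ × ℤ))}
        = Set.univ := by
      ext w
      simp only [Set.mem_univ, iff_true, Set.mem_setOf_eq]
      obtain ⟨u₀, hu₀⟩ := hsurj (w ⟨a, haS⟩)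
      refine ⟨u₀ - a, fun s => ?_⟩
      have hs : (s : ℤ × ℤ) = a := by
        have h2 : (s : ℤ × ℤ) ∈ ({a} : Finset (ℤ × ℤ)) := by
          rw [← hSa]; exact s.2
        exact Finset.mem_singleton.mp h2
      have hseq : s = ⟨a, haS⟩ := Subtype.ext hs
      rw [hseq]
      show w ⟨a, haS⟩ = η (u₀ - a + a)
      rw [sub_add_cancel]
      exact hu₀.symm
    have hpc : patternCount η S = Fintype.card A := by
      rw [patternCount, hall, Set.ncard_univ, Nat.card_eq_fintype_card]
      simp [Fintype.card_fun, Fintype.card_coe, hS1]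
    rw [hpc, hS1] at hcomp
    omega
  · have hS2 : 2 ≤ S.card := by
      have := hSne.card_pos
      omega
    obtain ⟨a, v, n, hv0, hcard, hmem⟩ := PeriodAux.exists_enum S hconv hcoll hS2
    have hn2 : 2 ≤ n := hcard ▸ hS2
    rw [hcard, PeriodAux.patternCount_eq_pc η a v n S hmem] at hcomp
    have hex : ∃ m, 1 ≤ m ∧ PeriodAux.pc η v (m + 1) ≤ PeriodAux.pc η v m := by
      by_contra hcon
      push_neg at hcon
      have grow : ∀ j : ℕ, Fintype.card A + j ≤ PeriodAux.pc η v (1 + j) := by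
        intro j
        induction j with
        | zero => simp [PeriodAux.pc_one hsurj]
        | succ j ih =>
            have h2 := hcon (1 + j) (by omega)
            have h3 : 1 + (j + 1) = (1 + j) + 1 := by omega
            rw [h3]
            omega
      have hgrow := grow (n - 1)
      rw [show 1 + (n - 1) = n by omega] at hgrow
      omega
    obtain ⟨m, hm1, hple⟩ := hex
    obtain ⟨N, hN1, hNper⟩ := PeriodAux.periodic_dir hple hm1
    refine ⟨(N : ℤ) • v, ?_, fun g => hNper g⟩
    intro h0
    apply hv0
    have h1 : (N : ℤ) • v.1 = 0 := congrArg Prod.fst h0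
    have h2 : (N : ℤ) • v.2 = 0 := congrArg Prod.snd h0
    rw [smul_eq_mul] at h1 h2
    have hNne : (N : ℤ) ≠ 0 := by
      have : N ≠ 0 := by omega
      exact_mod_cast this
    exact Prod.ext ((mul_eq_zero.mp h1).resolve_left hNne)
      ((mul_eq_zero.mp h2).resolve_left hNne)
end

section
/- Let η : ℤ² → A with P_η({g}) = |A| for all g ∈ ℤ² (all letters appear), and suppose P_η(U) ≤ |U| + |A| - 2 for some nonempty finite convex set U ⊂ ℤ². Then there exists a nonempty convex subset S ⊆ U with at least two points that is minimal among convex subsets T ⊆ U satisfying P_η(T) ≤ |T| + |A| - 2, and every such minimal S is an η-generating set: each vertex g of S satisfies P_η(S) = P_η(S \ {g}). -/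
lemma patternCount_mono {A : Type*} [Fintype A] (η : ℤ × ℤ → A)
    {T S : Finset (ℤ × ℤ)} (h : T ⊆ S) : patternCount η T ≤ patternCount η S := by
  classical
  set PT := {w : (↥T) → A | ∃ u : ℤ × ℤ, ∀ s : ↥T, w s = η (u + (s : ℤ × ℤ))}
  set PS := {w : (↥S) → A | ∃ u : ℤ × ℤ, ∀ s : ↥S, w s = η (u + (s : ℤ × ℤ))}
  have hfin : PS.Finite := Set.toFinite _
  let r : ((↥S) → A) → ((↥T) → A) := fun w t => w ⟨t, h t.2⟩
  have hsub : PT ⊆ r '' PS := by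
    rintro w' ⟨u, hu⟩
    refine ⟨fun s => η (u + (s : ℤ × ℤ)), ⟨u, fun _ => rfl⟩, ?_⟩
    funext t
    exact (hu t).symm
  calc patternCount η T = PT.ncard := rfl
    _ ≤ (r '' PS).ncard := Set.ncard_le_ncard hsub (hfin.image _)
    _ ≤ PS.ncard := Set.ncard_image_le hfin

/-- Existence of minimal low-complexity convex subsets, and every such minimal subset is an
`η`-generating set (each vertex `g`, i.e. a point whose removal leaves a convex set,
satisfies `P_η(S) = P_η(S \ {g})`). -/
theorem exists_minimal_generating
    {A : Type*} [Fintype A] (hA : 2 ≤ Fintype.card A)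
    (η : ℤ × ℤ → A) (hall : ∀ g : ℤ × ℤ, patternCount η {g} = Fintype.card A)
    (U : Finset (ℤ × ℤ)) (hUne : U.Nonempty) (hUconv : IsLatticeConvex U)
    (hU : patternCount η U ≤ U.card + Fintype.card A - 2) :
    (∃ S : Finset (ℤ × ℤ), S ⊆ U ∧ IsLatticeConvex S ∧ S.Nonempty ∧ 2 ≤ S.card ∧
      patternCount η S ≤ S.card + Fintype.card A - 2 ∧
      (∀ T : Finset (ℤ × ℤ), T ⊆ S → IsLatticeConvex T → T.Nonempty →
        patternCount η T ≤ T.card + Fintype.card A - 2 → T = S)) ∧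
    (∀ S : Finset (ℤ × ℤ), S ⊆ U → IsLatticeConvex S → S.Nonempty →
      patternCount η S ≤ S.card + Fintype.card A - 2 →
      (∀ T : Finset (ℤ × ℤ), T ⊆ S → IsLatticeConvex T → T.Nonempty →
        patternCount η T ≤ T.card + Fintype.card A - 2 → T = S) →
      ∀ g ∈ S, IsLatticeConvex (S.erase g) →
        patternCount η S = patternCount η (S.erase g)) := by
  classical
  -- Any set satisfying the bound has at least 2 elements.
  have hcard2 : ∀ S : Finset (ℤ × ℤ), S.Nonempty →
      patternCount η S ≤ S.card + Fintype.card A - 2 → 2 ≤ S.card := by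
    intro S hSne hS
    obtain ⟨g, hg⟩ := hSne
    have hsub : ({g} : Finset (ℤ × ℤ)) ⊆ S := Finset.singleton_subset_iff.2 hg
    have h1 : Fintype.card A ≤ patternCount η S := (hall g) ▸ patternCount_mono η hsub
    omega
  constructor
  · -- existence of a minimal set, by strong induction on card
    have key : ∀ n : ℕ, ∀ V : Finset (ℤ × ℤ), V.card ≤ n → V ⊆ U → IsLatticeConvex V →
        V.Nonempty → patternCount η V ≤ V.card + Fintype.card A - 2 →
        ∃ S : Finset (ℤ × ℤ), S ⊆ V ∧ IsLatticeConvex S ∧ S.Nonempty ∧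
          patternCount η S ≤ S.card + Fintype.card A - 2 ∧
          (∀ T : Finset (ℤ × ℤ), T ⊆ S → IsLatticeConvex T → T.Nonempty →
            patternCount η T ≤ T.card + Fintype.card A - 2 → T = S) := by
      intro n
      induction n with
      | zero =>
        intro V hVn _ _ hVne _
        exact absurd (Finset.card_pos.2 hVne) (by omega)
      | succ n ih =>
        intro V hVn hVU hVconv hVne hVb
        by_cases hmin : ∀ T : Finset (ℤ × ℤ), T ⊆ V → IsLatticeConvex T → T.Nonempty →
            patternCount η T ≤ T.card + Fintype.card A - 2 → T = V
        · exact ⟨V, Finset.Subset.refl V, hVconv, hVne, hVb, hmin⟩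
        · push_neg at hmin
          obtain ⟨T, hTV, hTconv, hTne, hTb, hTne'⟩ := hmin
          have hlt : T.card < V.card := Finset.card_lt_card (lt_of_le_of_ne hTV hTne')
          obtain ⟨S, hS1, hS2, hS3, hS4, hS5⟩ :=
            ih T (by omega) (hTV.trans hVU) hTconv hTne hTb
          exact ⟨S, hS1.trans hTV, hS2, hS3, hS4, hS5⟩
    obtain ⟨S, hS1, hS2, hS3, hS4, hS5⟩ :=
      key U.card U le_rfl (Finset.Subset.refl U) hUconv hUne hU
    exact ⟨S, hS1, hS2, hS3, hcard2 S hS3 hS4, hS4, hS5⟩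
  · -- every minimal set is generating
    intro S _ _ hSne hSb hmin g hg hEconv
    have h2 : 2 ≤ S.card := hcard2 S hSne hSb
    have hEcard : (S.erase g).card = S.card - 1 := Finset.card_erase_of_mem hg
    have hEne : (S.erase g).Nonempty := Finset.card_pos.1 (by omega)
    have hEsub : S.erase g ⊆ S := Finset.erase_subset g S
    have hnotle : ¬ patternCount η (S.erase g) ≤ (S.erase g).card + Fintype.card A - 2 := by
      intro hle
      have heq := hmin (S.erase g) hEsub hEconv hEne hle
      have : g ∈ S.erase g := by rw [heq]; exact hg
      exact (Finset.notMem_erase g S) this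
    have hmono := patternCount_mono η hEsub
    omega
end

section
/- Let η : ℤ² → A whose range is all of A (|A| ≥ 2), and let S be an mlc η-generating set, i.e., a finite convex set with P_η(S) ≤ (1/2)|S| + |A| - 1 such that every nonempty proper convex subset T ⊊ S satisfies P_η(T) > (1/2)|T| + |A| - 1. Then for every nonempty proper convex subset T ⊊ S, P_η(S) - P_η(T) ≤ ⌈(1/2)|S \ T|⌉ - 1. -/
/-- For an mlc `η`-generating set `S` and any nonempty proper convex subset `T ⊊ S`,
`P_η(S) - P_η(T) ≤ ⌈|S \ T| / 2⌉ - 1`. -/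
theorem mlc_complexity_difference
    {A : Type*} [Fintype A] (hA : 2 ≤ Fintype.card A)
    (η : ℤ × ℤ → A) (hsurj : Function.Surjective η)
    (S : Finset (ℤ × ℤ)) (hSne : S.Nonempty) (hSconv : IsLatticeConvex S)
    (hgen : ∀ g ∈ S, IsLatticeConvex (S.erase g) →
      patternCount η S = patternCount η (S.erase g))
    (hmlc1 : (patternCount η S : ℚ) ≤ (1 / 2) * S.card + Fintype.card A - 1)
    (hmlc2 : ∀ T : Finset (ℤ × ℤ), T ⊆ S → T ≠ S → T.Nonempty → IsLatticeConvex T →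
      ((1 : ℚ) / 2) * T.card + Fintype.card A - 1 < patternCount η T)
    (T : Finset (ℤ × ℤ)) (hTS : T ⊆ S) (hTneq : T ≠ S) (hTne : T.Nonempty)
    (hTconv : IsLatticeConvex T) :
    patternCount η S - patternCount η T ≤ ⌈(((S \ T).card : ℚ)) / 2⌉₊ - 1 := by
  have hle : T.card ≤ S.card := Finset.card_le_card hTS
  have hsd : ((S \ T).card : ℚ) = (S.card : ℚ) - T.card := by
    rw [Finset.card_sdiff_of_subset hTS]
    push_cast [Nat.cast_sub hle]
    ring
  have h2 := hmlc2 T hTS hTneq hTne hTconv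
  by_cases h : patternCount η T ≤ patternCount η S
  · have hlt : ((patternCount η S - patternCount η T : ℕ) : ℚ) < ((S \ T).card : ℚ) / 2 := by
      rw [Nat.cast_sub h, hsd]
      linarith
    have := Nat.lt_ceil.mpr hlt
    omega
  · omega
end

section
/- Let ξ : ℤ → A and ξ' : ℤ → A be bi-infinite sequences that are periodic of periods n and n' respectively. If ξ and ξ' agree on n + n' - gcd(n,n') consecutive integers, then ξ = ξ' on the whole common half of agreement extended by periodicity; in particular if both are globally periodic of periods n, n' and agree on an interval of length at least n + n' - gcd(n, n'), then ξ = ξ'. -/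
/-- Windowed Fine–Wilf: a function with two local periods `n' ≤ n` on a window of
length `n + n' - gcd n n'` is `gcd n n'`-periodic on that window. -/
theorem fine_wilf_window {A : Type*} :
    ∀ k : ℕ, ∀ n n' : ℕ, ∀ f : ℤ → A, n + n' ≤ k → 1 ≤ n' → n' ≤ n →
    (∀ x : ℤ, 0 ≤ x → x + n < (n : ℤ) + n' - Nat.gcd n n' → f (x + n) = f x) →
    (∀ x : ℤ, 0 ≤ x → x + n' < (n : ℤ) + n' - Nat.gcd n n' → f (x + n') = f x) →
    ∀ x y : ℤ, 0 ≤ x → x < (n : ℤ) + n' - Nat.gcd n n' →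
      0 ≤ y → y < (n : ℤ) + n' - Nat.gcd n n' →
      (Nat.gcd n n' : ℤ) ∣ x - y → f x = f y := by
  intro k
  induction k using Nat.strong_induction_on with
  | _ k IH =>
    intro n n' f hk hn' hle H1 H2 x y hx0 hxL hy0 hyL hdvd
    rcases eq_or_lt_of_le hle with heq | hlt
    · -- n' = n : the window has length n and x ≡ y mod n forces x = y
      subst heq
      have hg : Nat.gcd n' n' = n' := Nat.gcd_self n'
      rw [hg] at hxL hyL hdvd
      have : x - y = 0 := by
        refine Int.eq_zero_of_abs_lt_dvd hdvd ?_
        rw [abs_lt]; constructor <;> omega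
      have : x = y := by omega
      rw [this]
    · -- n' < n : reduce to periods (n - n', n')
      set g := Nat.gcd n n' with hgdef
      have hg1 : 1 ≤ g := Nat.gcd_pos_of_pos_left n' (by omega)
      have hgn : g ∣ n := Nat.gcd_dvd_left n n'
      have hgn' : g ∣ n' := Nat.gcd_dvd_right n n'
      set m : ℕ := n - n' with hmdef
      have hm1 : 1 ≤ m := by omega
      have hmn : m + n' = n := by omega
      have hgm : Nat.gcd m n' = g := by
        rw [hgdef, ← hmn, Nat.gcd_add_self_left]
      have hgdm : g ∣ m := hgm ▸ Nat.gcd_dvd_left m n'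
      have hgm' : g ≤ m := Nat.le_of_dvd (by omega) hgdm
      have hgle' : g ≤ n' := Nat.le_of_dvd (by omega) hgn'
      -- local periods for the smaller window
      have H1' : ∀ x : ℤ, 0 ≤ x → x + m < (m : ℤ) + n' - g → f (x + m) = f x := by
        intro z hz0 hzb
        have h2 : f ((z + m) + n') = f (z + m) := by
          apply H2 (z + m) (by positivity) (by push_cast; push_cast at hzb; omega)
        have h1 : f (z + n) = f z := by
          apply H1 z hz0 (by push_cast; push_cast at hzb; omega)
        have : ((z + m) + n' : ℤ) = z + n := by push_cast; omega
        rw [this] at h2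
        rw [← h2, h1]
      have H2' : ∀ x : ℤ, 0 ≤ x → x + n' < (m : ℤ) + n' - g → f (x + n') = f x := by
        intro z hz0 hzb
        apply H2 z hz0 (by push_cast; push_cast at hzb ⊢; omega)
      -- the reduced result, stated symmetrically via gcd_comm when n' > m
      have key : ∀ z w : ℤ, 0 ≤ z → z < (m : ℤ) + n' - g → 0 ≤ w →
          w < (m : ℤ) + n' - g → (g : ℤ) ∣ z - w → f z = f w := by
        intro z w hz0 hzb hw0 hwb hd
        rcases le_or_gt n' m with hord | hord
        · exact IH n (by omega) m n' f (by omega) hn' hord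
            (by rw [hgm]; exact H1') (by rw [hgm]; exact H2') z w hz0
            (by rw [hgm]; push_cast at hzb ⊢; omega) hw0
            (by rw [hgm]; push_cast at hwb ⊢; omega)
            (by rw [hgm]; exact hd)
        · have hgm2 : Nat.gcd n' m = g := by rw [Nat.gcd_comm]; exact hgm
          exact IH n (by omega) n' m f (by omega) hm1 (le_of_lt hord)
            (by rw [hgm2]; intro u hu0 hub; exact H2' u hu0 (by push_cast at hub ⊢; omega))
            (by rw [hgm2]; intro u hu0 hub; exact H1' u hu0 (by push_cast at hub ⊢; omega))
            z w hz0
            (by rw [hgm2]; push_cast at hzb ⊢; omega) hw0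
            (by rw [hgm2]; push_cast at hwb ⊢; omega)
            (by rw [hgm2]; exact hd)
      -- reduction of a point of the big window into the small window
      have reduce : ∀ z : ℤ, 0 ≤ z → z < (n : ℤ) + n' - g →
          ∃ w : ℤ, 0 ≤ w ∧ w < (m : ℤ) + n' - g ∧ f w = f z ∧ (g : ℤ) ∣ z - w := by
        intro z hz0 hzb
        rcases lt_or_ge z ((m : ℤ) + n' - g) with h | h
        · exact ⟨z, hz0, h, rfl, by simp⟩
        · refine ⟨z - n', by push_cast at h ⊢; omega, by push_cast at hzb ⊢; omega, ?_, ?_⟩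
          · have := H2 (z - n') (by push_cast at h ⊢; omega)
              (by push_cast at hzb ⊢; omega)
            simpa using this.symm
          · have : (z : ℤ) - (z - n') = (n' : ℤ) := by ring
            rw [this]
            exact_mod_cast Int.natCast_dvd_natCast.mpr hgn'
      obtain ⟨xr, hxr0, hxrb, hxrf, hxrd⟩ := reduce x hx0 hxL
      obtain ⟨yr, hyr0, hyrb, hyrf, hyrd⟩ := reduce y hy0 hyL
      rw [← hxrf, ← hyrf]
      apply key xr yr hxr0 hxrb hyr0 hyrb
      have : xr - yr = (x - y) - (x - xr) + (y - yr) := by ring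
      rw [this]
      exact dvd_add (dvd_sub hdvd hxrd) hyrd

/-- Fine–Wilf theorem for bi-infinite sequences: two sequences of periods `n` and `n'`
agreeing on `n + n' - gcd(n, n')` consecutive integers coincide everywhere. -/
theorem fine_wilf_biinfinite
    {A : Type*} (ξ ξ' : ℤ → A) (n n' : ℕ) (hn : 1 ≤ n) (hn' : 1 ≤ n')
    (hp : ∀ i : ℤ, ξ (i + n) = ξ i) (hp' : ∀ i : ℤ, ξ' (i + n') = ξ' i)
    (a : ℤ)
    (hagree : ∀ i : ℤ, a ≤ i → i < a + (n + n' - Nat.gcd n n' : ℕ) → ξ i = ξ' i) :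
    ξ = ξ' := by
  set g := Nat.gcd n n' with hgdef
  have hgn : g ∣ n := Nat.gcd_dvd_left n n'
  have hgn' : g ∣ n' := Nat.gcd_dvd_right n n'
  have hg1 : 1 ≤ g := Nat.gcd_pos_of_pos_left n' (by omega)
  have hgle : g ≤ n := Nat.le_of_dvd (by omega) hgn
  have hgle' : g ≤ n' := Nat.le_of_dvd (by omega) hgn'
  have hLcast : ((n + n' - g : ℕ) : ℤ) = (n : ℤ) + n' - g := by
    have : g ≤ n + n' := by omega
    push_cast [this]; ring
  rw [hLcast] at hagree
  -- periodicity for arbitrary multiples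
  have hper : ∀ (c j : ℤ), ξ (j + n * c) = ξ j := by
    intro c j
    have hP : Function.Periodic ξ (n : ℤ) := hp
    have := (hP.int_mul c) j
    rwa [mul_comm] at this
  have hper' : ∀ (c j : ℤ), ξ' (j + n' * c) = ξ' j := by
    intro c j
    have hP : Function.Periodic ξ' (n' : ℤ) := hp'
    have := (hP.int_mul c) j
    rwa [mul_comm] at this
  -- f : the common window function
  set f : ℤ → A := fun x => ξ (a + x) with hfdef
  have H1 : ∀ x : ℤ, 0 ≤ x → x + n < (n : ℤ) + n' - g → f (x + n) = f x := by
    intro x _ _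
    show ξ (a + (x + n)) = ξ (a + x)
    rw [← add_assoc]; exact hp (a + x)
  have H2 : ∀ x : ℤ, 0 ≤ x → x + n' < (n : ℤ) + n' - g → f (x + n') = f x := by
    intro x hx0 hxb
    show ξ (a + (x + n')) = ξ (a + x)
    have e1 : ξ (a + (x + n')) = ξ' (a + (x + n')) :=
      hagree _ (by omega) (by omega)
    have e2 : ξ' (a + (x + n')) = ξ' (a + x) := by
      rw [← add_assoc]; exact hp' (a + x)
    have e3 : ξ' (a + x) = ξ (a + x) :=
      (hagree _ (by omega) (by omega)).symm
    rw [e1, e2, e3]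
  -- the window result, handling both orders of n, n'
  have window : ∀ x y : ℤ, 0 ≤ x → x < (n : ℤ) + n' - g →
      0 ≤ y → y < (n : ℤ) + n' - g → (g : ℤ) ∣ x - y → f x = f y := by
    rcases le_or_gt n' n with hord | hord
    · exact fine_wilf_window (n + n') n n' f le_rfl hn' hord H1 H2
    · intro x y hx0 hxb hy0 hyb hd
      have hgc : Nat.gcd n' n = g := by rw [Nat.gcd_comm]
      exact fine_wilf_window (n' + n) n' n f le_rfl hn (le_of_lt hord)
        (by rw [hgc]; intro u hu0 hub; exact H2 u hu0 (by push_cast at hub ⊢; omega))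
        (by rw [hgc]; intro u hu0 hub; exact H1 u hu0 (by push_cast at hub ⊢; omega))
        x y hx0 (by rw [hgc]; push_cast at hxb ⊢; omega) hy0
        (by rw [hgc]; push_cast at hyb ⊢; omega) (by rw [hgc]; exact hd)
  funext i
  set x : ℤ := i - a with hxdef
  set r : ℤ := x % n with hrdef
  set r' : ℤ := x % n' with hr'def
  have hnne : (n : ℤ) ≠ 0 := by positivity
  have hn'ne : (n' : ℤ) ≠ 0 := by positivity
  have hr0 : 0 ≤ r := Int.emod_nonneg x hnne
  have hrlt : r < n := Int.emod_lt_of_pos x (by positivity)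
  have hr'0 : 0 ≤ r' := Int.emod_nonneg x hn'ne
  have hr'lt : r' < n' := Int.emod_lt_of_pos x (by positivity)
  have hxr : x = r + n * (x / n) := by
    rw [hrdef]; rw [Int.emod_add_mul_ediv x n]
  have hxr' : x = r' + n' * (x / n') := by
    rw [hr'def]; rw [Int.emod_add_mul_ediv x n']
  have e1 : ξ i = ξ (a + r) := by
    have : i = (a + r) + n * (x / n) := by omega
    rw [this]; exact hper _ _
  have e2 : ξ' i = ξ' (a + r') := by
    have : i = (a + r') + n' * (x / n') := by omega
    rw [this]; exact hper' _ _
  have e3 : ξ' (a + r') = ξ (a + r') :=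
    (hagree _ (by omega) (by omega)).symm
  have e4 : f r = f r' := by
    apply window r r' hr0 (by omega) hr'0 (by omega)
    have d1 : (g : ℤ) ∣ x - r := by
      rw [hxr]; ring_nf
      exact Dvd.dvd.mul_right (by exact_mod_cast Int.natCast_dvd_natCast.mpr hgn) _
    have d2 : (g : ℤ) ∣ x - r' := by
      rw [hxr']; ring_nf
      exact Dvd.dvd.mul_right (by exact_mod_cast Int.natCast_dvd_natCast.mpr hgn') _
    have : r - r' = (x - r') - (x - r) := by ring
    rw [this]; exact dvd_sub d2 d1
  rw [e1, e2, e3]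
  exact e4
end

section
/- Let η ∈ A^{ℤ²}, let ℓ ∈ 𝔾₁ be an oriented line through the origin, and suppose there exists a finite convex set S ⊂ ℤ² such that ℓ_S ∩ S = {g₀} is a single point which is η-generated by S (P_η(S) = P_η(S \ {g₀})). Then ℓ is a one-sided expansive direction on X_η: for any x, y ∈ X_η, x|_{H(ℓ)} = y|_{H(ℓ)} implies x = y. -/
/-- Cross product of two lattice vectors; for an oriented line of direction `v`, the
associated half plane `H(ℓ)` consists of the points `g` with `0 ≤ cross v g`. -/
def cross (v g : ℤ × ℤ) : ℤ := v.1 * g.2 - v.2 * g.1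

lemma cross_add (v a b : ℤ × ℤ) : cross v (a + b) = cross v a + cross v b := by
  simp only [cross, Prod.fst_add, Prod.snd_add]; ring

/-- Points of the orbit closure have all their patterns among the patterns of `η`. -/
lemma closure_pattern {A : Type*} [Fintype A] [TopologicalSpace A] [DiscreteTopology A]
    (η : ℤ × ℤ → A) (x : ℤ × ℤ → A)
    (hx : x ∈ closure {y : ℤ × ℤ → A | ∃ u : ℤ × ℤ, y = fun g => η (g + u)})
    (F : Finset (ℤ × ℤ)) : ∃ t : ℤ × ℤ, ∀ g ∈ F, x g = η (g + t) := by
  have hU : IsOpen {y : ℤ × ℤ → A | ∀ g ∈ F, y g = x g} := by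
    have : {y : ℤ × ℤ → A | ∀ g ∈ F, y g = x g}
        = ⋂ g ∈ F, (fun y : ℤ × ℤ → A => y g) ⁻¹' {x g} := by
      ext y; simp [Set.mem_iInter]
    rw [this]
    exact isOpen_biInter_finset fun g _ =>
      (continuous_apply g).isOpen_preimage _ (isOpen_discrete _)
  have hxU : x ∈ {y : ℤ × ℤ → A | ∀ g ∈ F, y g = x g} := fun g _ => rfl
  obtain ⟨z, hz1, u, rfl⟩ := (mem_closure_iff.mp hx) _ hU hxU
  exact ⟨u, fun g hg => (hz1 g hg).symm⟩

/-- If some finite convex set `S` has a single point `g₀` on its supporting line in the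
direction `v` of `ℓ`, and `g₀` is `η`-generated by `S`, then `ℓ` is a one-sided expansive
direction on `X_η`: two configurations of the orbit closure agreeing on the half plane
`H(ℓ)` are equal. -/
theorem one_sided_expansive_of_generated_vertex
    {A : Type*} [Fintype A] [TopologicalSpace A] [DiscreteTopology A]
    (η : ℤ × ℤ → A) (v : ℤ × ℤ) (hv : v ≠ 0)
    (S : Finset (ℤ × ℤ)) (hconv : IsLatticeConvex S)
    (g₀ : ℤ × ℤ) (hg₀ : g₀ ∈ S)
    (hsupp : ∀ s ∈ S, 0 ≤ cross v (s - g₀))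
    (hsingle : ∀ s ∈ S, cross v (s - g₀) = 0 → s = g₀)
    (hgen : patternCount η S = patternCount η (S.erase g₀)) :
    ∀ x ∈ closure {y : ℤ × ℤ → A | ∃ u : ℤ × ℤ, y = fun g => η (g + u)},
    ∀ y ∈ closure {y : ℤ × ℤ → A | ∃ u : ℤ × ℤ, y = fun g => η (g + u)},
      (∀ g : ℤ × ℤ, 0 ≤ cross v g → x g = y g) → x = y := by
  classical
  intro x hx y hy hagree
  -- the pattern sets
  set P : Set ((↥S) → A) := {w | ∃ u : ℤ × ℤ, ∀ s : ↥S, w s = η (u + (s : ℤ × ℤ))} with hP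
  set Q : Set ((↥(S.erase g₀)) → A) :=
    {w | ∃ u : ℤ × ℤ, ∀ s : ↥(S.erase g₀), w s = η (u + (s : ℤ × ℤ))} with hQ
  -- the restriction map
  set ρ : ((↥S) → A) → ((↥(S.erase g₀)) → A) :=
    fun w s => w ⟨(s : ℤ × ℤ), Finset.mem_of_mem_erase s.2⟩ with hρ
  have hmaps : ∀ w ∈ P, ρ w ∈ Q := by
    rintro w ⟨u, hu⟩
    exact ⟨u, fun s => hu _⟩
  have hsurj : ∀ w ∈ Q, ∃ w' ∈ P, ρ w' = w := by
    rintro w ⟨u, hu⟩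
    refine ⟨fun s => η (u + (s : ℤ × ℤ)), ⟨u, fun _ => rfl⟩, ?_⟩
    funext s
    exact (hu s).symm
  -- key injectivity on patterns
  have hinj : ∀ w₁ ∈ P, ∀ w₂ ∈ P, ρ w₁ = ρ w₂ → w₁ = w₂ := by
    intro w₁ hw₁ w₂ hw₂ hr
    exact Set.inj_on_of_surj_on_of_ncard_le (s := P) (t := Q) (fun w _ => ρ w)
      (fun w hw => hmaps w hw)
      (fun b hb => by obtain ⟨w', hw', hww⟩ := hsurj b hb; exact ⟨w', hw', hww⟩)
      (le_of_eq hgen) hw₁ hw₂ hr (Set.toFinite P)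
  -- main induction on depth below the half plane
  have main : ∀ n : ℕ, ∀ g : ℤ × ℤ, -(n : ℤ) ≤ cross v g → x g = y g := by
    intro n
    induction n with
    | zero => intro g hg; exact hagree g (by simpa using hg)
    | succ n ih =>
      intro g hg
      by_cases hcase : -(n : ℤ) ≤ cross v g
      · exact ih g hcase
      · -- translate S so that g₀ lands on g
        set u : ℤ × ℤ := g - g₀ with hu
        -- the patterns of x and y on u + S
        set wx : (↥S) → A := fun s => x (u + (s : ℤ × ℤ)) with hwx
        set wy : (↥S) → A := fun s => y (u + (s : ℤ × ℤ)) with hwy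
        have hpat : ∀ z : ℤ × ℤ → A,
            z ∈ closure {y : ℤ × ℤ → A | ∃ u : ℤ × ℤ, y = fun g => η (g + u)} →
            (fun s : ↥S => z (u + (s : ℤ × ℤ))) ∈ P := by
          intro z hz
          obtain ⟨t, ht⟩ := closure_pattern η z hz (S.image (fun s => u + s))
          refine ⟨u + t, fun s => ?_⟩
          show z (u + (s : ℤ × ℤ)) = η (u + t + (s : ℤ × ℤ))
          rw [ht _ (Finset.mem_image_of_mem _ s.2)]
          congr 1
          ring
        have hwxP : wx ∈ P := hpat x hx
        have hwyP : wy ∈ P := hpat y hy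
        -- they agree off g₀ by the induction hypothesis
        have hrest : ρ wx = ρ wy := by
          funext s
          have hsS : (s : ℤ × ℤ) ∈ S := Finset.mem_of_mem_erase s.2
          have hne : (s : ℤ × ℤ) ≠ g₀ := Finset.ne_of_mem_erase s.2
          have h1 : 0 ≤ cross v ((s : ℤ × ℤ) - g₀) := hsupp _ hsS
          have h2 : cross v ((s : ℤ × ℤ) - g₀) ≠ 0 := fun h => hne (hsingle _ hsS h)
          have h3 : (1 : ℤ) ≤ cross v ((s : ℤ × ℤ) - g₀) := by omega
          have h4 : -(n : ℤ) ≤ cross v (u + (s : ℤ × ℤ)) := by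
            have : u + (s : ℤ × ℤ) = g + ((s : ℤ × ℤ) - g₀) := by
              simp [hu]; abel
            rw [this, cross_add]
            omega
          exact ih _ h4
        have := hinj wx hwxP wy hwyP hrest
        have hg₀eq : wx ⟨g₀, hg₀⟩ = wy ⟨g₀, hg₀⟩ := by rw [this]
        have hug : u + g₀ = g := by simp [hu]
        simpa [hwx, hwy, hug] using hg₀eq
  funext g
  exact main (-(cross v g)).toNat g (by omega)
end

section
/- Let the configuration η : ℤ² → {white, black} be defined by η(g) = black if and only if g = (a,a) + b·(Σ_{i=6}^{c} i, 0) for some a ∈ ℤ, b ∈ {-1,0,1}, c ≥ 6, and white otherwise. Then P_η(3,4) = 7 = (1/2)·12 + |A| - 1 where |A| = 2, i.e., the number of distinct 3×4 rectangular patterns appearing in η is exactly 7. -/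
/-- The stripe predicate: `d` is a difference giving a black cell. -/
def Pp (d : ℤ) : Prop :=
  ∃ b c : ℤ, (b = -1 ∨ b = 0 ∨ b = 1) ∧ 6 ≤ c ∧ d = b * ((c * (c + 1) - 30) / 2)

lemma two_mul_E (c : ℤ) : 2 * ((c * (c + 1) - 30) / 2) = c * (c + 1) - 30 := by
  obtain ⟨k, hk⟩ := Int.even_mul_succ_self c
  omega

lemma E_ge (c : ℤ) (hc : 6 ≤ c) : 6 ≤ (c * (c + 1) - 30) / 2 := by
  have h := two_mul_E c
  nlinarith [mul_nonneg (by linarith : (0:ℤ) ≤ c - 6) (by linarith : (0:ℤ) ≤ c + 1)]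

lemma E_class (c : ℤ) (hc : 6 ≤ c) :
    (c * (c + 1) - 30) / 2 = 6 ∨ 13 ≤ (c * (c + 1) - 30) / 2 := by
  have h := two_mul_E c
  rcases hc.eq_or_lt with h6 | h7
  · left; subst h6; omega
  · right
    nlinarith [mul_nonneg (by linarith : (0:ℤ) ≤ c - 7) (by linarith : (0:ℤ) ≤ c + 1)]

lemma E_sep (c c' : ℤ) (hc : 6 ≤ c) (hc' : 6 ≤ c') :
    (c * (c + 1) - 30) / 2 = (c' * (c' + 1) - 30) / 2 ∨
      7 ≤ (c * (c + 1) - 30) / 2 - (c' * (c' + 1) - 30) / 2 ∨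
      7 ≤ (c' * (c' + 1) - 30) / 2 - (c * (c + 1) - 30) / 2 := by
  have h := two_mul_E c
  have h' := two_mul_E c'
  rcases lt_trichotomy c c' with hlt | rfl | hlt
  · right; right
    have h3 : (1:ℤ) * 14 ≤ (c' - c) * (c + c' + 1) :=
      mul_le_mul (by omega) (by omega) (by norm_num) (by omega)
    nlinarith [h3]
  · left; rfl
  · right; left
    have h3 : (1:ℤ) * 14 ≤ (c - c') * (c + c' + 1) :=
      mul_le_mul (by omega) (by omega) (by norm_num) (by omega)
    nlinarith [h3]

lemma Pgap {x y : ℤ} (hx : Pp x) (hy : Pp y) (h1 : x - y ≤ 5) (h2 : y - x ≤ 5) :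
    x = y := by
  obtain ⟨b, c, hb, hc, rfl⟩ := hx
  obtain ⟨b', c', hb', hc', rfl⟩ := hy
  have e := E_ge c hc
  have e' := E_ge c' hc'
  have s := E_sep c c' hc hc'
  set X := (c * (c + 1) - 30) / 2 with hX
  set Y := (c' * (c' + 1) - 30) / 2 with hY
  rcases hb with rfl | rfl | rfl <;> rcases hb' with rfl | rfl | rfl <;> omega

lemma Psmall {k : ℤ} (hk : Pp k) (h1 : -5 ≤ k) (h2 : k ≤ 5) : k = 0 := by
  obtain ⟨b, c, hb, hc, rfl⟩ := hk
  have e := E_ge c hc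
  set X := (c * (c + 1) - 30) / 2 with hX
  rcases hb with rfl | rfl | rfl <;> omega

lemma Pmid {k : ℤ} (hk : Pp k) (h1 : 7 ≤ k) (h2 : k ≤ 12) : False := by
  obtain ⟨b, c, hb, hc, rfl⟩ := hk
  have e := E_ge c hc
  have e2 := E_class c hc
  set X := (c * (c + 1) - 30) / 2 with hX
  rcases hb with rfl | rfl | rfl <;> omega

lemma P0 : Pp 0 := ⟨0, 6, Or.inr (Or.inl rfl), le_refl _, by ring⟩

/-- The pattern rectangle. -/
noncomputable def Spat : Finset (ℤ × ℤ) := (Finset.Icc (0 : ℤ) 2) ×ˢ (Finset.Icc (0 : ℤ) 3)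

/-- The candidate patterns. -/
def G (m : ℤ) : (↥Spat) → Bool := fun s => decide ((s : ℤ × ℤ).1 - (s : ℤ × ℤ).2 = m)

lemma smem (s : ↥Spat) :
    -3 ≤ (s : ℤ × ℤ).1 - (s : ℤ × ℤ).2 ∧ (s : ℤ × ℤ).1 - (s : ℤ × ℤ).2 ≤ 2 := by
  have hs := s.2
  simp only [Spat, Finset.mem_product, Finset.mem_Icc] at hs
  omega

lemma card_G :
    ({G (-3), G (-2), G (-1), G 0, G 1, G 2, G 100} : Finset (↥Spat → Bool)).card = 7 := by
  decide

/-- The example configuration of the introduction: `η(g)` is black (`true`) iff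
`g = (a, a) + b·(Σ_{i=6}^c i, 0)` with `a ∈ ℤ`, `b ∈ {-1,0,1}`, `c ≥ 6`; it satisfies
`P_η(3,4) = 7 = (1/2)·12 + |A| - 1` with `|A| = 2`. -/
theorem example_configuration_complexity
    (η : ℤ × ℤ → Bool)
    (hη : ∀ g : ℤ × ℤ, η g = true ↔
      ∃ a b c : ℤ, (b = -1 ∨ b = 0 ∨ b = 1) ∧ 6 ≤ c ∧
        g = (a + b * ((c * (c + 1) - 30) / 2), a)) :
    patternCount η ((Finset.Icc (0 : ℤ) 2) ×ˢ (Finset.Icc (0 : ℤ) 3)) = 7 := by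
  have hη' : ∀ g : ℤ × ℤ, η g = true ↔ Pp (g.1 - g.2) := by
    intro g
    rw [hη g]
    constructor
    · rintro ⟨a, b, c, hb, hc, hg⟩
      refine ⟨b, c, hb, hc, ?_⟩
      rw [hg]
      simp
    · rintro ⟨b, c, hb, hc, hg⟩
      refine ⟨g.2, b, c, hb, hc, ?_⟩
      have : g.1 = g.2 + b * ((c * (c + 1) - 30) / 2) := by linarith
      exact Prod.ext this rfl
  have hGm : ∀ m : ℤ, -3 ≤ m → m ≤ 2 →
      ∃ u : ℤ × ℤ, ∀ s : ↥Spat, G m s = η (u + (s : ℤ × ℤ)) := by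
    intro m h1 h2
    refine ⟨(-m, 0), fun s => ?_⟩
    have hb := smem s
    have harith : ((-m, (0:ℤ)) + (s : ℤ × ℤ)).1 - ((-m, (0:ℤ)) + (s : ℤ × ℤ)).2
        = -m + ((s : ℤ × ℤ).1 - (s : ℤ × ℤ).2) := by
      simp only [Prod.fst_add, Prod.snd_add]
      ring
    by_cases hsm : (s : ℤ × ℤ).1 - (s : ℤ × ℤ).2 = m
    · have hr : η ((-m, (0:ℤ)) + (s : ℤ × ℤ)) = true := by
        rw [hη' _, harith, hsm]
        have : -m + m = (0:ℤ) := by ring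
        rw [this]; exact P0
      rw [hr]
      simp [G, hsm]
    · have hr : η ((-m, (0:ℤ)) + (s : ℤ × ℤ)) = false := by
        rw [Bool.eq_false_iff]
        intro ht
        have hp := (hη' _).mp ht
        rw [harith] at hp
        have := Psmall hp (by omega) (by omega)
        omega
      rw [hr]
      simp only [G, decide_eq_false_iff_not]
      exact hsm
  have hG100 : ∃ u : ℤ × ℤ, ∀ s : ↥Spat, G 100 s = η (u + (s : ℤ × ℤ)) := by
    refine ⟨(10, 0), fun s => ?_⟩
    have hb := smem s
    have harith : (((10:ℤ), (0:ℤ)) + (s : ℤ × ℤ)).1 - (((10:ℤ), (0:ℤ)) + (s : ℤ × ℤ)).2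
        = 10 + ((s : ℤ × ℤ).1 - (s : ℤ × ℤ).2) := by
      simp only [Prod.fst_add, Prod.snd_add]
      ring
    have hr : η (((10:ℤ), (0:ℤ)) + (s : ℤ × ℤ)) = false := by
      rw [Bool.eq_false_iff]
      intro ht
      have hp := (hη' _).mp ht
      rw [harith] at hp
      exact Pmid hp (by omega) (by omega)
    rw [hr]
    simp only [G, decide_eq_false_iff_not]
    omega
  have hset : {w : (↥Spat) → Bool | ∃ u : ℤ × ℤ, ∀ s : ↥Spat, w s = η (u + (s : ℤ × ℤ))}
      = ↑({G (-3), G (-2), G (-1), G 0, G 1, G 2, G 100} : Finset (↥Spat → Bool)) := by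
    ext w
    simp only [Set.mem_setOf_eq, Finset.coe_insert, Set.mem_insert_iff, Finset.coe_singleton,
      Set.mem_singleton_iff]
    constructor
    · rintro ⟨u, hu⟩
      have key : ∀ s : ↥Spat, w s = true ↔
          Pp ((u.1 - u.2) + ((s : ℤ × ℤ).1 - (s : ℤ × ℤ).2)) := by
        intro s
        rw [hu s, hη' (u + (s : ℤ × ℤ))]
        have harith : (u + (s : ℤ × ℤ)).1 - (u + (s : ℤ × ℤ)).2
            = (u.1 - u.2) + ((s : ℤ × ℤ).1 - (s : ℤ × ℤ).2) := by
          simp only [Prod.fst_add, Prod.snd_add]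
          ring
        rw [harith]
      by_cases h : ∃ m, -3 ≤ m ∧ m ≤ 2 ∧ Pp ((u.1 - u.2) + m)
      · obtain ⟨m, hm1, hm2, hPm⟩ := h
        have hw : w = G m := by
          funext s
          have hb := smem s
          by_cases hsm : (s : ℤ × ℤ).1 - (s : ℤ × ℤ).2 = m
          · have hws : w s = true := (key s).mpr (by rw [hsm]; exact hPm)
            rw [hws]
            symm
            simp [G, hsm]
          · have hws : w s = false := by
              rw [Bool.eq_false_iff]
              intro ht
              have hp := (key s).mp ht
              have := Pgap hp hPm (by omega) (by omega)
              omega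
            rw [hws]
            symm
            simp only [G, decide_eq_false_iff_not]
            exact hsm
        subst hw
        have hm : m = -3 ∨ m = -2 ∨ m = -1 ∨ m = 0 ∨ m = 1 ∨ m = 2 := by omega
        rcases hm with rfl | rfl | rfl | rfl | rfl | rfl <;> tauto
      · push_neg at h
        have hw : w = G 100 := by
          funext s
          have hb := smem s
          have hws : w s = false := by
            rw [Bool.eq_false_iff]
            intro ht
            exact h _ hb.1 hb.2 ((key s).mp ht)
          rw [hws]
          symm
          simp only [G, decide_eq_false_iff_not]
          omega
        subst hw
        tauto
    · rintro (rfl | rfl | rfl | rfl | rfl | rfl | rfl)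
      · exact hGm (-3) (by norm_num) (by norm_num)
      · exact hGm (-2) (by norm_num) (by norm_num)
      · exact hGm (-1) (by norm_num) (by norm_num)
      · exact hGm 0 (by norm_num) (by norm_num)
      · exact hGm 1 (by norm_num) (by norm_num)
      · exact hGm 2 (by norm_num) (by norm_num)
      · exact hG100
  show Set.ncard {w : (↥Spat) → Bool | ∃ u : ℤ × ℤ, ∀ s : ↥Spat, w s = η (u + (s : ℤ × ℤ))} = 7
  rw [hset, Set.ncard_coe_finset, card_G]
end

section
/- Let U ⊂ ℤ² be a finite convex set whose convex hull has positive area, and let ϖ, ϖ' be two antiparallel edges of U with |ϖ ∩ U| ≤ |ϖ' ∩ U|. Then for any line ℓ parallel to ϖ that intersects conv(U) and contains at least one lattice point, |ℓ ∩ U| ≥ |ϖ ∩ U| - 1. -/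
lemma halfspace_convex (A B r : ℝ) : Convex ℝ {x : ℝ × ℝ | r ≤ A * x.2 - B * x.1} := by
  intro x hx y hy a b ha hb hab
  simp only [Set.mem_setOf_eq, Prod.fst_add, Prod.snd_add, Prod.smul_fst, Prod.smul_snd,
    smul_eq_mul] at *
  have hh1 := mul_le_mul_of_nonneg_left hx ha
  have hh2 := mul_le_mul_of_nonneg_left hy hb
  have h3 : r = a * r + b * r := by rw [← add_mul, hab, one_mul]
  nlinarith [hh1, hh2, h3]

lemma emb_add_smul (x : ℤ × ℤ) (k : ℤ) (w : ℤ × ℤ) :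
    emb (x + k • w) = emb x + (k : ℝ) • emb w := by
  simp only [emb, Prod.fst_add, Prod.snd_add, Prod.smul_fst, Prod.smul_snd, smul_eq_mul,
    Prod.mk_add_mk, Prod.smul_mk]
  push_cast
  rfl

/-- If `ϖ, ϖ'` are antiparallel edges of a finite convex set `U` with
`|ϖ ∩ U| ≤ |ϖ' ∩ U|`, then every line parallel to `ϖ` through a lattice point `q` that
meets `conv(U)` satisfies `|ℓ ∩ U| ≥ |ϖ ∩ U| - 1`. -/
theorem parallel_line_card_ge
    (U : Finset (ℤ × ℤ)) (hUconv : IsLatticeConvex U)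
    (harea : ¬ Collinear ℝ (emb '' (U : Set (ℤ × ℤ))))
    (v : ℤ × ℤ) (hv : v ≠ 0)
    (g₀ g₁ : ℤ × ℤ) (hg₀ : g₀ ∈ U) (hg₁ : g₁ ∈ U)
    (hsupp₀ : ∀ s ∈ U, 0 ≤ cross v (s - g₀))
    (hsupp₁ : ∀ s ∈ U, 0 ≤ cross (-v) (s - g₁))
    (hedge₀ : 2 ≤ (U.filter fun s => cross v (s - g₀) = 0).card)
    (hedge₁ : 2 ≤ (U.filter fun s => cross (-v) (s - g₁) = 0).card)
    (hle : (U.filter fun s => cross v (s - g₀) = 0).card ≤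
      (U.filter fun s => cross (-v) (s - g₁) = 0).card)
    (q : ℤ × ℤ)
    (hmeet : ∃ t : ℝ, emb q + t • emb v ∈ convexHull ℝ (emb '' (U : Set (ℤ × ℤ)))) :
    (U.filter fun s => cross v (s - g₀) = 0).card - 1 ≤
      (U.filter fun s => cross v (s - q) = 0).card := by
  classical
  -- primitive direction vector
  have hgpos : 0 < Int.gcd v.1 v.2 := by
    rcases Nat.eq_zero_or_pos (Int.gcd v.1 v.2) with h | h
    · exact absurd (Prod.ext (Int.gcd_eq_zero_iff.mp h).1 (Int.gcd_eq_zero_iff.mp h).2) hv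
    · exact h
  set d : ℤ := (Int.gcd v.1 v.2 : ℤ) with hd
  have hd0 : 0 < d := by rw [hd]; exact_mod_cast hgpos
  obtain ⟨w, hv1, hv2, hcop⟩ :
      ∃ w : ℤ × ℤ, v.1 = d * w.1 ∧ v.2 = d * w.2 ∧ Int.gcd w.1 w.2 = 1 :=
    ⟨(v.1 / d, v.2 / d), (Int.mul_ediv_cancel' (Int.gcd_dvd_left _ _)).symm,
      (Int.mul_ediv_cancel' (Int.gcd_dvd_right _ _)).symm, Int.gcd_div_gcd_div_gcd hgpos⟩
  obtain ⟨A, B, hAB⟩ : ∃ A B : ℤ, A * w.1 + B * w.2 = 1 := by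
    obtain ⟨a, b, h⟩ := Int.isCoprime_iff_gcd_eq_one.mpr hcop
    exact ⟨a, b, h⟩
  set kk : ℤ × ℤ → ℤ := fun u => A * u.1 + B * u.2 with hkk
  have hcrossd : ∀ u : ℤ × ℤ, cross v u = d * cross w u := by
    intro u; simp only [cross, hv1, hv2]; ring
  have key : ∀ u : ℤ × ℤ, cross v u = 0 → u = kk u • w := by
    intro u hu
    have hw0 : cross w u = 0 := by
      rw [hcrossd] at hu
      exact (mul_eq_zero.1 hu).resolve_left (by omega)
    have h1 : w.1 * u.2 - w.2 * u.1 = 0 := hw0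
    have e1 : u.1 = (A * u.1 + B * u.2) * w.1 := by linear_combination (-u.1) * hAB - B * h1
    have e2 : u.2 = (A * u.1 + B * u.2) * w.2 := by linear_combination (-u.2) * hAB + A * h1
    exact Prod.ext (by simpa [hkk] using e1) (by simpa [hkk] using e2)
  -- edge structure
  have edge : ∀ (g' : ℤ × ℤ) (E : Finset (ℤ × ℤ)), E.Nonempty →
      (∀ s ∈ E, cross v (s - g') = 0) →
      ∃ p K, p ∈ E ∧ p + K • w ∈ E ∧ (E.card : ℤ) ≤ K + 1 := by
    intro g' E hne hE
    obtain ⟨KS, hKSdef⟩ : ∃ KS : Finset ℤ, KS = E.image (fun s => kk (s - g')) := ⟨_, rfl⟩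
    have hKne : KS.Nonempty := by rw [hKSdef]; exact hne.image _
    have hmin : KS.min' hKne ∈ E.image (fun s => kk (s - g')) := by
      rw [← hKSdef]; exact KS.min'_mem hKne
    have hmax : KS.max' hKne ∈ E.image (fun s => kk (s - g')) := by
      rw [← hKSdef]; exact KS.max'_mem hKne
    obtain ⟨pa, hpa, hpak⟩ := Finset.mem_image.1 hmin
    obtain ⟨pb, hpb, hpbk⟩ := Finset.mem_image.1 hmax
    have hpaw : pa - g' = (KS.min' hKne) • w := by rw [← hpak]; exact key _ (hE pa hpa)
    have hpbw : pb - g' = (KS.max' hKne) • w := by rw [← hpbk]; exact key _ (hE pb hpb)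
    refine ⟨pa, KS.max' hKne - KS.min' hKne, hpa, ?_, ?_⟩
    · have h : pb - pa = (KS.max' hKne - KS.min' hKne) • w := by
        rw [sub_smul, ← hpaw, ← hpbw]; ring
      have h2 : pb = pa + (KS.max' hKne - KS.min' hKne) • w := sub_eq_iff_eq_add'.mp h
      rwa [← h2]
    · have hinj : Set.InjOn (fun s => kk (s - g')) E := by
        intro x hx y hy hxy
        have hx' := key _ (hE x hx)
        have hy' := key _ (hE y hy)
        simp only at hxy
        rw [hxy, ← hy'] at hx'
        exact sub_left_inj.mp hx'
      have hcardKS : KS.card = E.card := by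
        rw [hKSdef]; exact Finset.card_image_of_injOn hinj
      have hsub : KS ⊆ Finset.Icc (KS.min' hKne) (KS.max' hKne) := fun k hk =>
        Finset.mem_Icc.2 ⟨KS.min'_le k hk, KS.le_max' k hk⟩
      have hcc := Finset.card_le_card hsub
      rw [Int.card_Icc] at hcc
      have hmm : KS.min' hKne ≤ KS.max' hKne :=
        KS.min'_le (KS.max' hKne) (KS.max'_mem hKne)
      omega
  set E₀ := U.filter fun s => cross v (s - g₀) = 0 with hE₀
  set E₁ := U.filter fun s => cross (-v) (s - g₁) = 0 with hE₁
  have hE₀mem : ∀ s ∈ E₀, cross v (s - g₀) = 0 := fun s hs => (Finset.mem_filter.1 hs).2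
  have hE₁mem : ∀ s ∈ E₁, cross v (s - g₁) = 0 := by
    intro s hs
    have h := (Finset.mem_filter.1 hs).2
    simp only [cross, Prod.fst_neg, Prod.snd_neg] at h ⊢
    linarith
  have hg₀E : g₀ ∈ E₀ := Finset.mem_filter.2 ⟨hg₀, by simp [cross]⟩
  have hg₁E : g₁ ∈ E₁ := Finset.mem_filter.2 ⟨hg₁, by simp [cross]⟩
  obtain ⟨p₀, K₀, hp₀, hq₀, hK₀⟩ := edge g₀ E₀ ⟨g₀, hg₀E⟩ hE₀mem
  obtain ⟨p₁, K₁, hp₁, hq₁, hK₁⟩ := edge g₁ E₁ ⟨g₁, hg₁E⟩ hE₁mem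
  set m := E₀.card with hm
  have hK₀m : (m : ℤ) - 1 ≤ K₀ := by omega
  have hK₁m : (m : ℤ) - 1 ≤ K₁ := by
    have : (m : ℤ) ≤ E₁.card := by exact_mod_cast hle
    omega
  -- the level function and its bounds
  set M : ℤ := cross v (g₁ - g₀) with hM
  have hub : ∀ s ∈ U, cross v (s - g₀) ≤ M := by
    intro s hs
    have h := hsupp₁ s hs
    simp only [cross, Prod.fst_neg, Prod.snd_neg, Prod.fst_sub, Prod.snd_sub, hM] at h ⊢
    linarith
  have hM0 : 0 < M := by
    rcases lt_or_ge 0 M with h | h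
    · exact h
    exfalso; apply harea
    have hM0' : M = 0 := le_antisymm h (hsupp₀ g₁ hg₁)
    rw [collinear_iff_of_mem (Set.mem_image_of_mem emb (by exact_mod_cast hg₀ : g₀ ∈ (U : Set (ℤ × ℤ))))]
    refine ⟨emb w, ?_⟩
    rintro x ⟨s, hs, rfl⟩
    have hs' : s ∈ U := by exact_mod_cast hs
    have h0 : cross v (s - g₀) = 0 :=
      le_antisymm (hM0' ▸ hub s hs') (hsupp₀ s hs')
    have hkey := key _ h0
    refine ⟨(kk (s - g₀) : ℝ), ?_⟩
    have h2 : s = g₀ + kk (s - g₀) • w := sub_eq_iff_eq_add'.mp hkey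
    have h3 : emb s = emb g₀ + (kk (s - g₀) : ℝ) • emb w := by
      conv_lhs => rw [h2]
      rw [emb_add_smul]
    rw [h3, vadd_eq_add]
    abel
  -- bounds for points of the hull
  set F : ℝ × ℝ → ℝ := fun x => (v.1 : ℝ) * x.2 - (v.2 : ℝ) * x.1 with hF
  have hcastF : ∀ s : ℤ × ℤ, F (emb s) - F (emb g₀) = (cross v (s - g₀) : ℝ) := by
    intro s; simp [hF, emb, cross]; push_cast; ring
  have hlow : ∀ x ∈ convexHull ℝ (emb '' (U : Set (ℤ × ℤ))), F (emb g₀) ≤ F x := by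
    intro x hx
    have h := convexHull_min (s := emb '' (U : Set (ℤ × ℤ)))
      (t := {x : ℝ × ℝ | F (emb g₀) ≤ (v.1 : ℝ) * x.2 - (v.2 : ℝ) * x.1}) ?_
      (halfspace_convex _ _ _)
    · exact h hx
    · rintro _ ⟨s, hs, rfl⟩
      have hs' : s ∈ U := by exact_mod_cast hs
      have h0 : (0 : ℝ) ≤ (cross v (s - g₀) : ℝ) := by exact_mod_cast hsupp₀ s hs'
      rw [← hcastF s] at h0
      simpa [hF] using h0
  have hupp : ∀ x ∈ convexHull ℝ (emb '' (U : Set (ℤ × ℤ))), F x ≤ F (emb g₁) := by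
    intro x hx
    have h := convexHull_min (s := emb '' (U : Set (ℤ × ℤ)))
      (t := {x : ℝ × ℝ | -(F (emb g₁)) ≤ (-v.1 : ℝ) * x.2 - (-v.2 : ℝ) * x.1}) ?_
      (halfspace_convex _ _ _)
    · have := h hx
      simp only [Set.mem_setOf_eq, hF] at this ⊢
      linarith
    · rintro _ ⟨s, hs, rfl⟩
      have hs' : s ∈ U := by exact_mod_cast hs
      have h0 : (0 : ℝ) ≤ (cross (-v) (s - g₁) : ℝ) := by exact_mod_cast hsupp₁ s hs'
      simp only [cross, Prod.fst_neg, Prod.snd_neg, Prod.fst_sub, Prod.snd_sub] at h0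
      push_cast at h0
      simp only [Set.mem_setOf_eq, hF, emb]
      push_cast
      linarith
  -- level of q
  set c : ℤ := cross v (q - g₀) with hc
  obtain ⟨t, ht⟩ := hmeet
  have hFq : F (emb q + t • emb v) = F (emb q) := by
    simp [hF, emb, Prod.fst_add, Prod.snd_add, Prod.smul_fst, Prod.smul_snd, smul_eq_mul]
    ring
  have hc0 : (0 : ℤ) ≤ c := by
    have h := hlow _ ht
    rw [hFq] at h
    have e1 := hcastF q
    have h2 : (0:ℝ) ≤ (c : ℝ) := by linarith
    exact_mod_cast h2
  have hcM : c ≤ M := by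
    have h := hupp _ ht
    rw [hFq] at h
    have e1 := hcastF q
    have e2 := hcastF g₁
    have h2 : (c : ℝ) ≤ ((cross v (g₁ - g₀) : ℤ) : ℝ) := by linarith
    have h3 : c ≤ cross v (g₁ - g₀) := by exact_mod_cast h2
    rw [hM]; exact h3
  -- the two hull points P, Q on the line of q
  set lam : ℝ := (c : ℝ) / (M : ℝ) with hlam
  have hMR : (0:ℝ) < (M:ℝ) := by exact_mod_cast hM0
  have hlam0 : 0 ≤ lam := div_nonneg (by exact_mod_cast hc0) (le_of_lt hMR)
  have hlam1 : lam ≤ 1 := by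
    rw [hlam, div_le_one hMR]; exact_mod_cast hcM
  set P : ℝ × ℝ := (1 - lam) • emb p₀ + lam • emb p₁ with hP
  set Q : ℝ × ℝ := (1 - lam) • emb (p₀ + K₀ • w) + lam • emb (p₁ + K₁ • w) with hQ
  have hUp₀ : p₀ ∈ U := (Finset.mem_filter.1 hp₀).1
  have hUp₁ : p₁ ∈ U := (Finset.mem_filter.1 hp₁).1
  have hUq₀ : p₀ + K₀ • w ∈ U := (Finset.mem_filter.1 hq₀).1
  have hUq₁ : p₁ + K₁ • w ∈ U := (Finset.mem_filter.1 hq₁).1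
  have hmemhull : ∀ s ∈ U, emb s ∈ convexHull ℝ (emb '' (U : Set (ℤ × ℤ))) :=
    fun s hs => subset_convexHull ℝ _ (Set.mem_image_of_mem emb (by exact_mod_cast hs))
  have hPhull : P ∈ convexHull ℝ (emb '' (U : Set (ℤ × ℤ))) :=
    (convex_convexHull ℝ _) (hmemhull _ hUp₀) (hmemhull _ hUp₁)
      (by linarith) hlam0 (by ring)
  have hQhull : Q ∈ convexHull ℝ (emb '' (U : Set (ℤ × ℤ))) :=
    (convex_convexHull ℝ _) (hmemhull _ hUq₀) (hmemhull _ hUq₁)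
      (by linarith) hlam0 (by ring)
  set tau : ℝ := (1 - lam) * (K₀ : ℝ) + lam * (K₁ : ℝ) with htau
  have hQP : Q = P + tau • emb w := by
    rw [hQ, hP, emb_add_smul, emb_add_smul]
    apply Prod.ext <;>
      simp only [htau, Prod.fst_add, Prod.snd_add, Prod.smul_fst, Prod.smul_snd,
        smul_eq_mul] <;> ring
  have htaum : (m : ℝ) - 1 ≤ tau := by
    have h0 : ((m : ℝ) - 1) ≤ (K₀ : ℝ) := by exact_mod_cast hK₀m
    have h1 : ((m : ℝ) - 1) ≤ (K₁ : ℝ) := by exact_mod_cast hK₁m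
    nlinarith [hlam0, hlam1]
  have hm2 : 2 ≤ m := hedge₀
  have htaupos : 0 < tau := by
    have : (2:ℝ) ≤ (m:ℝ) := by exact_mod_cast hm2
    linarith
  -- P lies on the line through q with direction w
  have keyR : ∀ x : ℝ × ℝ, (w.1 : ℝ) * x.2 - (w.2 : ℝ) * x.1 = 0 →
      x = ((A : ℝ) * x.1 + (B : ℝ) * x.2) • emb w := by
    intro x hx
    have hABR : (A : ℝ) * (w.1 : ℝ) + (B : ℝ) * (w.2 : ℝ) = 1 := by exact_mod_cast hAB
    apply Prod.ext
    · simp only [Prod.smul_fst, smul_eq_mul, emb]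
      linear_combination (-x.1) * hABR - (B : ℝ) * hx
    · simp only [Prod.smul_snd, smul_eq_mul, emb]
      linear_combination (-x.2) * hABR + (A : ℝ) * hx
  have hcrossP : (w.1 : ℝ) * (P - emb q).2 - (w.2 : ℝ) * (P - emb q).1 = 0 := by
    have h₀ : (v.1 : ℝ) * ((p₀.2 : ℝ) - q.2) - (v.2 : ℝ) * ((p₀.1 : ℝ) - q.1) = -(c : ℝ) := by
      have e : cross v (p₀ - q) = -c := by
        have := hE₀mem p₀ hp₀
        simp only [cross, Prod.fst_sub, Prod.snd_sub, hc] at this ⊢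
        linarith
      have e2 : ((cross v (p₀ - q) : ℤ) : ℝ) = -(c : ℝ) := by exact_mod_cast e
      simp only [cross, Prod.fst_sub, Prod.snd_sub] at e2
      push_cast at e2
      linarith [e2]
    have h₁ : (v.1 : ℝ) * ((p₁.2 : ℝ) - q.2) - (v.2 : ℝ) * ((p₁.1 : ℝ) - q.1)
        = (M : ℝ) - (c : ℝ) := by
      have e : cross v (p₁ - q) = M - c := by
        have := hE₁mem p₁ hp₁
        simp only [cross, Prod.fst_sub, Prod.snd_sub, hc, hM] at this ⊢
        linarith
      have e2 : ((cross v (p₁ - q) : ℤ) : ℝ) = (M : ℝ) - (c : ℝ) := by exact_mod_cast e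
      simp only [cross, Prod.fst_sub, Prod.snd_sub] at e2
      push_cast at e2
      linarith [e2]
    have hvd : (v.1 : ℝ) = (d : ℝ) * (w.1 : ℝ) := by exact_mod_cast hv1
    have hvd2 : (v.2 : ℝ) = (d : ℝ) * (w.2 : ℝ) := by exact_mod_cast hv2
    have hdne : (d : ℝ) ≠ 0 := by positivity
    have hlamM : lam * (M : ℝ) = (c : ℝ) := by
      rw [hlam]; field_simp
    have hv' : (v.1 : ℝ) * (P - emb q).2 - (v.2 : ℝ) * (P - emb q).1 = 0 := by
      simp only [hP, emb, Prod.fst_sub, Prod.snd_sub, Prod.fst_add, Prod.snd_add,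
        Prod.smul_fst, Prod.smul_snd, smul_eq_mul]
      linear_combination (1 - lam) * h₀ + lam * h₁ + hlamM
    rw [hvd, hvd2] at hv'
    have : (d : ℝ) * ((w.1 : ℝ) * (P - emb q).2 - (w.2 : ℝ) * (P - emb q).1) = 0 := by
      linarith [hv']
    exact (mul_eq_zero.1 this).resolve_left hdne
  set sig : ℝ := (A : ℝ) * (P - emb q).1 + (B : ℝ) * (P - emb q).2 with hsig
  have hPq : P = emb q + sig • emb w := by
    have h2 : P - emb q = sig • emb w := by rw [hsig]; exact keyR _ hcrossP
    exact sub_eq_iff_eq_add'.mp h2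
  -- lattice points on the segment [P, Q]
  have hwne : w ≠ 0 := by
    intro h
    apply hv
    apply Prod.ext <;> simp [hv1, hv2, h]
  have hseg : ∀ k : ℤ, ⌈sig⌉ ≤ k → k ≤ ⌊sig + tau⌋ → q + k • w ∈ U := by
    intro k hk1 hk2
    apply hUconv
    set mu : ℝ := ((k : ℝ) - sig) / tau with hmu
    have hk1' : sig ≤ (k : ℝ) := le_trans (Int.le_ceil sig) (by exact_mod_cast hk1)
    have hk2' : (k : ℝ) ≤ sig + tau := le_trans (by exact_mod_cast hk2) (Int.floor_le _)
    have hmu0 : 0 ≤ mu := div_nonneg (by linarith) (le_of_lt htaupos)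
    have hmu1 : mu ≤ 1 := by rw [hmu, div_le_one htaupos]; linarith
    have hmem := (convex_convexHull ℝ _) hPhull hQhull (by linarith : (0:ℝ) ≤ 1 - mu)
      hmu0 (by ring)
    have heq : (1 - mu) • P + mu • Q = emb (q + k • w) := by
      rw [hQP, hPq, emb_add_smul]
      have hmt : mu * tau = (k : ℝ) - sig := by
        rw [hmu]; field_simp
      apply Prod.ext
      · simp only [emb, Prod.fst_add, Prod.snd_add, Prod.smul_fst, Prod.smul_snd, smul_eq_mul]
        linear_combination (w.1 : ℝ) * hmt
      · simp only [emb, Prod.fst_add, Prod.snd_add, Prod.smul_fst, Prod.smul_snd, smul_eq_mul]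
        linear_combination (w.2 : ℝ) * hmt
    rwa [heq] at hmem
  -- conclude by counting
  set I : Finset ℤ := Finset.Icc ⌈sig⌉ ⌊sig + tau⌋ with hI
  have hmap : I.image (fun k => q + k • w) ⊆ U.filter fun s => cross v (s - q) = 0 := by
    intro s hs
    obtain ⟨k, hk, rfl⟩ := Finset.mem_image.1 hs
    obtain ⟨hk1, hk2⟩ := Finset.mem_Icc.1 hk
    refine Finset.mem_filter.2 ⟨hseg k hk1 hk2, ?_⟩
    simp only [add_sub_cancel_left, cross, hv1, hv2, Prod.smul_fst, Prod.smul_snd, smul_eq_mul]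
    ring
  have hinj : Set.InjOn (fun k : ℤ => q + k • w) (I : Set ℤ) := by
    intro x hx y hy hxy
    simp only [add_right_inj] at hxy
    have h1 : x • w.1 = y • w.1 := congrArg Prod.fst hxy
    have h2 : x • w.2 = y • w.2 := congrArg Prod.snd hxy
    simp only [smul_eq_mul] at h1 h2
    have : w.1 ≠ 0 ∨ w.2 ≠ 0 := by
      by_contra h; push_neg at h; exact hwne (Prod.ext h.1 h.2)
    rcases this with h | h
    · exact mul_right_cancel₀ h h1
    · exact mul_right_cancel₀ h h2
  have hcard1 : I.card ≤ (U.filter fun s => cross v (s - q) = 0).card := by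
    rw [← Finset.card_image_of_injOn hinj]
    exact Finset.card_le_card hmap
  have hIcard : I.card = (⌊sig + tau⌋ + 1 - ⌈sig⌉).toNat := Int.card_Icc _ _
  have hfloor : sig + tau - 1 < (⌊sig + tau⌋ : ℝ) := Int.sub_one_lt_floor _
  have hceil : (⌈sig⌉ : ℝ) < sig + 1 := Int.ceil_lt_add_one _
  have hbig : (m : ℤ) - 1 ≤ ⌊sig + tau⌋ + 1 - ⌈sig⌉ := by
    have hR : (m : ℝ) - 2 < (⌊sig + tau⌋ : ℝ) + 1 - (⌈sig⌉ : ℝ) := by linarith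
    have hZ : (m : ℤ) - 2 < ⌊sig + tau⌋ + 1 - ⌈sig⌉ := by exact_mod_cast hR
    omega
  omega
end
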